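/- arXiv:1003.0495 — 6 statements merged into one kernel-verified Lean document; each statement's English description precedes it below -/
import Mathlib

section
/- Let k ≥ 1 be an integer. The linear map u ↦ ∂u/∂z (partial derivative with respect to the third coordinate), acting on real-valued functions on the open infinite pyramid U∞ = (0,1) × (0,1) × (0,∞), restricts to a linear bijection from Q_{k+2}^{[k−1,k−1]} onto Q_{k+3}^{[k−1,k−1]}. (Equivalently: the divergence maps the third summand {0}×{0}×Q_{k+2}^{[k−1,k−1]} of R^{(2)}_k bijectively onto R^{(3)}_k = Q_{k+3}^{[k−1,k−1]}.) -/
open MeasureTheory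

noncomputable section

/-- The open infinite pyramid U∞ = (0,1) × (0,1) × (0,∞). -/
def Uinf : Set (ℝ × ℝ × ℝ) :=
  {p | 0 < p.1 ∧ p.1 < 1 ∧ 0 < p.2.1 ∧ p.2.1 < 1 ∧ 0 < p.2.2}

/-- Partial derivative with respect to the first coordinate x. -/
def Dx (u : (ℝ × ℝ × ℝ) → ℝ) : (ℝ × ℝ × ℝ) → ℝ :=
  fun p => deriv (fun t => u (t, p.2.1, p.2.2)) p.1

/-- Partial derivative with respect to the second coordinate y. -/
def Dy (u : (ℝ × ℝ × ℝ) → ℝ) : (ℝ × ℝ × ℝ) → ℝ :=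
  fun p => deriv (fun t => u (p.1, t, p.2.2)) p.2.1

/-- Partial derivative with respect to the third coordinate z. -/
def Dz (u : (ℝ × ℝ × ℝ) → ℝ) : (ℝ × ℝ × ℝ) → ℝ :=
  fun p => deriv (fun t => u (p.1, p.2.1, t)) p.2.2

/-- The space Q_k^{[l,m]}: the span of (x,y,z) ↦ x^a y^b/(1+z)^c for
0 ≤ c ≤ k, 0 ≤ a ≤ c+l−k, 0 ≤ b ≤ c+m−k. -/
def QB (k : ℕ) (l m : ℤ) : Submodule ℝ ((ℝ × ℝ × ℝ) → ℝ) :=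
  Submodule.span ℝ {f | ∃ a b c : ℕ, c ≤ k ∧ (a : ℤ) ≤ c + l - k ∧ (b : ℤ) ≤ c + m - k ∧
    f = fun p => p.1 ^ a * p.2.1 ^ b / (1 + p.2.2) ^ c}

lemma gen_deriv (a b c : ℕ) (x y t : ℝ) (ht : (1:ℝ) + t ≠ 0) :
    HasDerivAt (fun s => x ^ a * y ^ b / (1 + s) ^ c)
      (-(c:ℝ) * (x ^ a * y ^ b / (1 + t) ^ (c+1))) t := by
  have h1 : HasDerivAt (fun s : ℝ => 1 + s) 1 t := by
    simpa using (hasDerivAt_id t).const_add (1:ℝ)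
  have hpow := h1.fun_pow c
  have hinv := hpow.fun_inv (pow_ne_zero c ht)
  have hmul := hinv.const_mul (x ^ a * y ^ b)
  have heq : (fun s => x ^ a * y ^ b * ((1 + s) ^ c)⁻¹)
      = fun s : ℝ => x ^ a * y ^ b / (1 + s) ^ c := by
    funext s; rw [div_eq_mul_inv]
  rw [heq] at hmul
  refine hmul.congr_deriv ?_
  rcases c with _ | c
  · simp
  · simp only [Nat.add_sub_cancel]
    field_simp
    ring

lemma gen_tendsto (a b c : ℕ) (hc : 1 ≤ c) (x y : ℝ) :
    Filter.Tendsto (fun t => x ^ a * y ^ b / (1 + t) ^ c) Filter.atTop (nhds 0) := by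
  have h1 : Filter.Tendsto (fun t : ℝ => 1 + t) Filter.atTop Filter.atTop :=
    Filter.tendsto_atTop_add_const_left _ 1 Filter.tendsto_id
  have h2 : Filter.Tendsto (fun t : ℝ => (1 + t) ^ c) Filter.atTop Filter.atTop :=
    (Filter.tendsto_pow_atTop (by omega)).comp h1
  have h3 := h2.inv_tendsto_atTop
  have := h3.const_mul (x ^ a * y ^ b)
  simpa [div_eq_mul_inv] using this

/-- for k ≥ 1, the map u ↦ ∂u/∂z restricts to a (linear) bijection
from Q_{k+2}^{[k−1,k−1]} onto Q_{k+3}^{[k−1,k−1]}, as functions on the open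
infinite pyramid U∞: it maps into the target space, is injective, and is surjective. -/
theorem stmt_14 (k : ℕ) (hk : 1 ≤ k) :
    (∀ u ∈ QB (k + 2) ((k : ℤ) - 1) ((k : ℤ) - 1),
      ∃ w ∈ QB (k + 3) ((k : ℤ) - 1) ((k : ℤ) - 1), Set.EqOn (Dz u) w Uinf) ∧
    (∀ u ∈ QB (k + 2) ((k : ℤ) - 1) ((k : ℤ) - 1),
      ∀ v ∈ QB (k + 2) ((k : ℤ) - 1) ((k : ℤ) - 1),
        Set.EqOn (Dz u) (Dz v) Uinf → Set.EqOn u v Uinf) ∧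
    (∀ w ∈ QB (k + 3) ((k : ℤ) - 1) ((k : ℤ) - 1),
      ∃ u ∈ QB (k + 2) ((k : ℤ) - 1) ((k : ℤ) - 1), Set.EqOn (Dz u) w Uinf) := by
  -- Key: every element of the source space has a "derivative" in the target space,
  -- in the strong sense of HasDerivAt on each vertical slice.
  have H1 : ∀ u ∈ QB (k + 2) ((k : ℤ) - 1) ((k : ℤ) - 1),
      ∃ w ∈ QB (k + 3) ((k : ℤ) - 1) ((k : ℤ) - 1),
        ∀ x y t : ℝ, 0 < t → HasDerivAt (fun s => u (x, y, s)) (w (x, y, t)) t := by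
    intro u hu
    induction hu using Submodule.span_induction with
    | mem f hf =>
      obtain ⟨a, b, c, hck, hac, hbc, rfl⟩ := hf
      have hc3 : 3 ≤ c := by omega
      refine ⟨(-(c:ℝ)) • (fun p : ℝ × ℝ × ℝ => p.1 ^ a * p.2.1 ^ b / (1 + p.2.2) ^ (c+1)),
        Submodule.smul_mem _ _ (Submodule.subset_span
          ⟨a, b, c + 1, by omega, by push_cast; omega, by push_cast; omega, rfl⟩),
        fun x y t ht => ?_⟩
      have ht' : (1:ℝ) + t ≠ 0 := by positivity
      simpa [Pi.smul_apply, smul_eq_mul] using gen_deriv a b c x y t ht'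
    | zero =>
      exact ⟨0, Submodule.zero_mem _, fun x y t _ => by
        simpa using hasDerivAt_const t (0:ℝ)⟩
    | add f g hf hg ihf ihg =>
      obtain ⟨w1, hw1, h1⟩ := ihf
      obtain ⟨w2, hw2, h2⟩ := ihg
      exact ⟨w1 + w2, Submodule.add_mem _ hw1 hw2, fun x y t ht => by
        simpa using (h1 x y t ht).fun_add (h2 x y t ht)⟩
    | smul r f hf ihf =>
      obtain ⟨w, hw, h⟩ := ihf
      exact ⟨r • w, Submodule.smul_mem _ _ hw, fun x y t ht => by
        simpa [smul_eq_mul] using (h x y t ht).const_mul r⟩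
  -- Every element of the source space tends to 0 along each vertical line.
  have HT : ∀ u ∈ QB (k + 2) ((k : ℤ) - 1) ((k : ℤ) - 1),
      ∀ x y : ℝ, Filter.Tendsto (fun t => u (x, y, t)) Filter.atTop (nhds 0) := by
    intro u hu
    induction hu using Submodule.span_induction with
    | mem f hf =>
      obtain ⟨a, b, c, hck, hac, hbc, rfl⟩ := hf
      have hc3 : 3 ≤ c := by omega
      exact fun x y => gen_tendsto a b c (by omega) x y
    | zero => exact fun x y => by simpa using (tendsto_const_nhds :
        Filter.Tendsto (fun _ : ℝ => (0:ℝ)) Filter.atTop (nhds 0))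
    | add f g hf hg ihf ihg =>
      exact fun x y => by simpa using (ihf x y).add (ihg x y)
    | smul r f hf ihf =>
      exact fun x y => by simpa [smul_eq_mul] using (ihf x y).const_mul r
  -- Surjectivity, in the strong slicewise-derivative sense.
  have H3 : ∀ w ∈ QB (k + 3) ((k : ℤ) - 1) ((k : ℤ) - 1),
      ∃ u ∈ QB (k + 2) ((k : ℤ) - 1) ((k : ℤ) - 1),
        ∀ x y t : ℝ, 0 < t → HasDerivAt (fun s => u (x, y, s)) (w (x, y, t)) t := by
    intro w hw
    induction hw using Submodule.span_induction with
    | mem f hf =>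
      obtain ⟨a, b, c, hck, hac, hbc, rfl⟩ := hf
      have hc4 : 4 ≤ c := by omega
      obtain ⟨d, rfl⟩ : ∃ d, c = d + 1 := ⟨c - 1, by omega⟩
      have hd : (d:ℝ) ≠ 0 := by
        have : 3 ≤ d := by omega
        positivity
      refine ⟨(-(1:ℝ)/(d:ℝ)) • (fun p : ℝ × ℝ × ℝ => p.1 ^ a * p.2.1 ^ b / (1 + p.2.2) ^ d),
        Submodule.smul_mem _ _ (Submodule.subset_span
          ⟨a, b, d, by omega, by push_cast at hac ⊢; omega, by push_cast at hbc ⊢; omega, rfl⟩),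
        fun x y t ht => ?_⟩
      have ht' : (1:ℝ) + t ≠ 0 := by positivity
      have h := (gen_deriv a b d x y t ht').const_mul (-(1:ℝ)/(d:ℝ))
      have heq : -(1:ℝ)/(d:ℝ) * (-(d:ℝ) * (x ^ a * y ^ b / (1 + t) ^ (d+1)))
          = x ^ a * y ^ b / (1 + t) ^ (d+1) := by field_simp
      rw [heq] at h
      simpa [Pi.smul_apply, smul_eq_mul, mul_comm, mul_div_assoc] using h
    | zero =>
      exact ⟨0, Submodule.zero_mem _, fun x y t _ => by
        simpa using hasDerivAt_const t (0:ℝ)⟩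
    | add f g hf hg ihf ihg =>
      obtain ⟨u1, hu1, h1⟩ := ihf
      obtain ⟨u2, hu2, h2⟩ := ihg
      exact ⟨u1 + u2, Submodule.add_mem _ hu1 hu2, fun x y t ht => by
        simpa using (h1 x y t ht).fun_add (h2 x y t ht)⟩
    | smul r f hf ihf =>
      obtain ⟨u, hu, h⟩ := ihf
      exact ⟨r • u, Submodule.smul_mem _ _ hu, fun x y t ht => by
        simpa [smul_eq_mul] using (h x y t ht).const_mul r⟩
  refine ⟨?_, ?_, ?_⟩
  · -- maps into the target
    intro u hu
    obtain ⟨w, hw, h⟩ := H1 u hu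
    refine ⟨w, hw, fun p hp => ?_⟩
    exact (h p.1 p.2.1 p.2.2 hp.2.2.2.2).deriv
  · -- injectivity
    intro u hu v hv hDz p hp
    obtain ⟨hx0, hx1, hy0, hy1, hz⟩ := hp
    obtain ⟨wu, _, hu'⟩ := H1 u hu
    obtain ⟨wv, _, hv'⟩ := H1 v hv
    set x := p.1; set y := p.2.1; set z := p.2.2
    have hderiv : ∀ t : ℝ, 0 < t →
        HasDerivAt (fun s => u (x, y, s) - v (x, y, s)) 0 t := by
      intro t ht
      have h1 := hu' x y t ht
      have h2 := hv' x y t ht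
      have e1 : Dz u (x, y, t) = wu (x, y, t) := h1.deriv
      have e2 : Dz v (x, y, t) = wv (x, y, t) := h2.deriv
      have e3 : Dz u (x, y, t) = Dz v (x, y, t) := hDz ⟨hx0, hx1, hy0, hy1, ht⟩
      have heq : wu (x, y, t) - wv (x, y, t) = 0 := by
        rw [← e1, ← e2, e3, sub_self]
      simpa [heq] using h1.fun_sub h2
    have hconst : ∀ T : ℝ, z ≤ T → u (x, y, T) - v (x, y, T) = u (x, y, z) - v (x, y, z) := by
      intro T hT
      have hcont : ContinuousOn (fun s => u (x, y, s) - v (x, y, s)) (Set.Icc z T) :=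
        fun t htm => (hderiv t (lt_of_lt_of_le hz htm.1)).continuousAt.continuousWithinAt
      have hd : ∀ t ∈ Set.Ico z T,
          HasDerivWithinAt (fun s => u (x, y, s) - v (x, y, s)) 0 (Set.Ici t) t :=
        fun t htm => (hderiv t (lt_of_lt_of_le hz htm.1)).hasDerivWithinAt
      exact constant_of_has_deriv_right_zero hcont hd T ⟨hT, le_refl T⟩
    have htend : Filter.Tendsto (fun t => u (x, y, t) - v (x, y, t)) Filter.atTop (nhds 0) := by
      simpa using (HT u hu x y).sub (HT v hv x y)
    have htend2 : Filter.Tendsto (fun t => u (x, y, t) - v (x, y, t)) Filter.atTop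
        (nhds (u (x, y, z) - v (x, y, z))) := by
      refine Filter.Tendsto.congr' ?_ tendsto_const_nhds
      filter_upwards [Filter.eventually_ge_atTop z] with T hT
      exact (hconst T hT).symm
    have hz0 : u (x, y, z) - v (x, y, z) = 0 := tendsto_nhds_unique htend2 htend
    have : u (x, y, z) = v (x, y, z) := sub_eq_zero.mp hz0
    exact this
  · -- surjectivity
    intro w hw
    obtain ⟨u, hu, h⟩ := H3 w hw
    refine ⟨u, hu, fun p hp => ?_⟩
    exact (h p.1 p.2.1 p.2.2 hp.2.2.2.2).deriv
end
end

section
/- Let k ≥ 1 be an integer. Suppose u₁ ∈ Q_{k+1}^{[k−1,k]} and u₂ ∈ Q_{k+1}^{[k,k−1]} (real-valued functions on the open infinite pyramid U∞) are such that the curl of the vector field (u₁, u₂, 0) vanishes identically on U∞, i.e. ∂u₂/∂z = 0, ∂u₁/∂z = 0, and ∂u₂/∂x − ∂u₁/∂y = 0 on U∞. Then u₁ = 0 and u₂ = 0. (The curl is injective on Q_{k+1}^{[k−1,k]} × Q_{k+1}^{[k,k−1]} × {0}.) -/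
open MeasureTheory

noncomputable section

open Filter Set

lemma qb_slice (k' : ℕ) (l m : ℤ) (h : l < k' ∨ m < k') (u : (ℝ × ℝ × ℝ) → ℝ)
    (hu : u ∈ QB k' l m) (x y : ℝ) :
    DifferentiableOn ℝ (fun z => u (x, y, z)) (Set.Ioi 0) ∧
      Tendsto (fun z => u (x, y, z)) atTop (nhds 0) := by
  induction hu using Submodule.span_induction with
  | mem f hf =>
    obtain ⟨a, b, c, hck, ha, hb, rfl⟩ := hf
    have hc1 : 1 ≤ c := by omega
    simp only
    constructor
    · intro z hz
      have h1 : (0:ℝ) < 1 + z := by have := mem_Ioi.mp hz; linarith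
      exact (((differentiableAt_const _).div
        ((((differentiableAt_const (1:ℝ)).add differentiableAt_fun_id).pow c))
        (pow_ne_zero c h1.ne')).differentiableWithinAt)
    · have h2 : Tendsto (fun z : ℝ => (1 + z) ^ c) atTop atTop :=
        (tendsto_pow_atTop (by omega)).comp (tendsto_atTop_add_const_left _ _ tendsto_id)
      have h3 : Tendsto (fun z : ℝ => ((1 + z) ^ c)⁻¹) atTop (nhds 0) :=
        h2.inv_tendsto_atTop
      have := h3.const_mul (x ^ a * y ^ b)
      simpa [div_eq_mul_inv] using this
  | zero => simpa using tendsto_const_nhds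
  | add f g _ _ hf hg =>
    exact ⟨hf.1.add hg.1, by simpa using hf.2.add hg.2⟩
  | smul r f _ hf =>
    exact ⟨hf.1.const_smul r, by simpa using hf.2.const_mul r⟩

lemma vanish (k' : ℕ) (l m : ℤ) (h : l < k' ∨ m < k') (u : (ℝ × ℝ × ℝ) → ℝ)
    (hu : u ∈ QB k' l m) (hdz : ∀ p ∈ Uinf, Dz u p = 0) :
    ∀ p ∈ Uinf, u p = 0 := by
  rintro ⟨x, y, z⟩ ⟨hx0, hx1, hy0, hy1, hz0⟩
  obtain ⟨hdiff, hlim⟩ := qb_slice k' l m h u hu x y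
  set g : ℝ → ℝ := fun t => u (x, y, t) with hg
  -- g is constant on [z, t] for t ≥ z
  have hconst : ∀ t, z ≤ t → g t = g z := by
    intro t ht
    have hd : DifferentiableOn ℝ g (Icc z t) :=
      hdiff.mono (fun s hs => mem_Ioi.mpr (lt_of_lt_of_le hz0 hs.1))
    have := constant_of_derivWithin_zero hd ?_ t (right_mem_Icc.mpr ht)
    · exact this
    · intro s hs
      have hs0 : 0 < s := lt_of_lt_of_le hz0 hs.1
      have hda : DifferentiableAt ℝ g s :=
        hdiff.differentiableAt (Ioi_mem_nhds hs0)
      rw [hda.derivWithin ((uniqueDiffOn_Icc (lt_of_le_of_lt hs.1 hs.2)).uniqueDiffWithinAt (Ico_subset_Icc_self hs))]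
      exact hdz (x, y, s) ⟨hx0, hx1, hy0, hy1, hs0⟩
  have : Tendsto g atTop (nhds (g z)) := by
    apply Tendsto.congr' _ (tendsto_const_nhds (x := g z))
    filter_upwards [eventually_ge_atTop z] with t ht
    exact (hconst t ht).symm
  exact tendsto_nhds_unique this hlim

/-- the curl is injective on Q_{k+1}^{[k−1,k]} × Q_{k+1}^{[k,k−1]} × {0}:
if the curl of (u₁, u₂, 0) vanishes on U∞ then u₁ = u₂ = 0 on U∞. -/
theorem stmt_15 (k : ℕ) (hk : 1 ≤ k) (u1 u2 : (ℝ × ℝ × ℝ) → ℝ)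
    (hu1 : u1 ∈ QB (k + 1) ((k : ℤ) - 1) k) (hu2 : u2 ∈ QB (k + 1) k ((k : ℤ) - 1))
    (hc1 : ∀ p ∈ Uinf, Dz u2 p = 0)
    (hc2 : ∀ p ∈ Uinf, Dz u1 p = 0)
    (hc3 : ∀ p ∈ Uinf, Dx u2 p - Dy u1 p = 0) :
    (∀ p ∈ Uinf, u1 p = 0) ∧ (∀ p ∈ Uinf, u2 p = 0) := by
  exact ⟨vanish (k + 1) ((k : ℤ) - 1) k (Or.inl (by push_cast; omega)) u1 hu1 hc2,
    vanish (k + 1) k ((k : ℤ) - 1) (Or.inr (by push_cast; omega)) u2 hu2 hc1⟩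
end
end

section
/- Let k ≥ 1 be an integer and let v = (v₁,v₂,v₃) be a vector field on the open infinite pyramid U∞ belonging to R^{(1)}_k, i.e. v = (w₁, w₂, 0) + ∇q with w₁ ∈ Q_{k+1}^{[k−1,k]}, w₂ ∈ Q_{k+1}^{[k,k−1]}, and q ∈ Q_k^{[k,k]}. If the curl of v vanishes identically on U∞, then there exists u ∈ Q_k^{[k,k]} such that v = ∇u on U∞. (Exactness of the sequence R^{(0)}_k → R^{(1)}_k → R^{(2)}_k at R^{(1)}_k.) -/
open MeasureTheory

noncomputable section

section Helpers

open Filter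

private lemma HasDerivAt.congr_val {f : ℝ → ℝ} {v v' x : ℝ} (h : HasDerivAt f v x)
    (hv : v' = v) : HasDerivAt f v' x := hv ▸ h

private lemma hd_inv (c : ℕ) {z : ℝ} (hz : (1:ℝ) + z ≠ 0) :
    HasDerivAt (fun t : ℝ => ((1 + t) ^ c)⁻¹) (-(c:ℝ) / (1 + z) ^ (c+1)) z := by
  have h1 : HasDerivAt (fun t : ℝ => (1 + t) ^ c) ((c:ℝ) * (1 + z) ^ (c-1) * 1) z :=
    ((hasDerivAt_id z).const_add (1:ℝ)).pow c
  have h2 := h1.inv (pow_ne_zero c hz)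
  refine h2.congr_val ?_
  rcases c with _ | m
  · simp
  · have hne : ((1:ℝ)+z)^(m+1) ≠ 0 := pow_ne_zero _ hz
    simp only [Nat.add_sub_cancel]
    field_simp
    ring

private lemma hdK (K : ℝ) (c : ℕ) {z : ℝ} (hz : (1:ℝ) + z ≠ 0) :
    HasDerivAt (fun t : ℝ => K / (1 + t) ^ c) (K * (-(c:ℝ) / (1 + z) ^ (c+1))) z := by
  simpa [div_eq_mul_inv] using (hd_inv c hz).const_mul K

private lemma hdP (a : ℕ) (K : ℝ) (x : ℝ) :
    HasDerivAt (fun t : ℝ => t ^ a * K) ((a:ℝ) * x ^ (a-1) * K) x :=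
  (hasDerivAt_pow a x).mul_const K

private lemma hdz_gen (n : ℕ) (K : Fin n → ℝ) (C : Fin n → ℕ) {z : ℝ}
    (hz : (1:ℝ) + z ≠ 0) :
    HasDerivAt (fun t => ∑ i, K i / (1 + t) ^ C i)
      (∑ i, K i * (-(C i : ℝ) / (1 + z) ^ (C i + 1))) z :=
  HasDerivAt.fun_sum fun i _ => hdK (K i) (C i) hz

private lemma hdx_gen (n : ℕ) (K : Fin n → ℝ) (A : Fin n → ℕ) (x : ℝ) :
    HasDerivAt (fun t => ∑ i, t ^ A i * K i) (∑ i, (A i : ℝ) * x ^ (A i - 1) * K i) x :=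
  HasDerivAt.fun_sum fun i _ => hdP (A i) (K i) x

private lemma const_zero (n : ℕ) (K : Fin n → ℝ) (C : Fin n → ℕ)
    (hC : ∀ i, 1 ≤ C i)
    (hder : ∀ z : ℝ, 0 < z → (∑ i, K i * (-(C i : ℝ) / (1 + z) ^ (C i + 1))) = 0) :
    ∀ z : ℝ, 0 < z → (∑ i, K i / (1 + z) ^ C i) = 0 := by
  intro z hz
  set g : ℝ → ℝ := fun t => ∑ i, K i / (1 + t) ^ C i with hg
  have hderiv : ∀ t ∈ Set.Ioi (0:ℝ), HasFDerivWithinAt g (0 : ℝ →L[ℝ] ℝ) (Set.Ioi 0) t := by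
    intro t ht
    have h1t : (1:ℝ) + t ≠ 0 := by rw [Set.mem_Ioi] at ht; positivity
    have h0 : HasDerivAt g 0 t := (hdz_gen n K C h1t).congr_val (hder t ht).symm
    have h0' : HasFDerivAt g (0 : ℝ →L[ℝ] ℝ) t := by
      have h := h0.hasFDerivAt
      have e : (ContinuousLinearMap.toSpanSingleton ℝ (0:ℝ)) = (0 : ℝ →L[ℝ] ℝ) := by
        ext; simp
      rwa [e] at h
    exact h0'.hasFDerivWithinAt
  have hconst : ∀ t ∈ Set.Ioi (0:ℝ), g t = g z := by
    intro t ht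
    have hb : ∀ x ∈ Set.Ioi (0:ℝ), ‖(0 : ℝ →L[ℝ] ℝ)‖ ≤ 0 := fun x _ => by simp
    have := Convex.norm_image_sub_le_of_norm_hasFDerivWithin_le
      hderiv hb (convex_Ioi 0) (Set.mem_Ioi.mpr hz) ht
    have h0 : ‖g t - g z‖ ≤ 0 := by simpa using this
    have := norm_le_zero_iff.mp h0
    linarith [sub_eq_zero.mp this]
  have hlim : Tendsto g atTop (nhds 0) := by
    have hterm : ∀ i : Fin n, Tendsto (fun t : ℝ => K i / (1 + t) ^ C i) atTop (nhds 0) := by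
      intro i
      refine Tendsto.div_atTop tendsto_const_nhds ?_
      have h1 : Tendsto (fun t : ℝ => 1 + t) atTop atTop :=
        tendsto_atTop_add_const_left atTop 1 tendsto_id
      have h2 := (tendsto_pow_atTop (Nat.one_le_iff_ne_zero.mp (hC i))).comp h1
      exact h2
    have := tendsto_finset_sum Finset.univ (fun i (_ : i ∈ Finset.univ) => hterm i)
    simpa using this
  have hlim2 : Tendsto g atTop (nhds (g z)) := by
    refine Tendsto.congr' ?_ tendsto_const_nhds
    filter_upwards [eventually_gt_atTop 0] with t ht
    exact (hconst t ht).symm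
  exact tendsto_nhds_unique hlim2 hlim

private lemma rep {k : ℕ} {l m : ℤ} {q : (ℝ × ℝ × ℝ) → ℝ} (h : q ∈ QB k l m) :
    ∃ (n : ℕ) (r : Fin n → ℝ) (A B C : Fin n → ℕ),
      (∀ i, C i ≤ k ∧ (A i : ℤ) ≤ C i + l - k ∧ (B i : ℤ) ≤ C i + m - k) ∧
      ∀ x y z : ℝ, q (x, y, z) = ∑ i, r i * (x ^ A i * y ^ B i / (1 + z) ^ C i) := by
  obtain ⟨n, r, g, hq⟩ := Submodule.mem_span_set'.mp h
  have hgi : ∀ i, ∃ a b c : ℕ, c ≤ k ∧ (a : ℤ) ≤ c + l - k ∧ (b : ℤ) ≤ c + m - k ∧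
      (g i : (ℝ × ℝ × ℝ) → ℝ) = fun p => p.1 ^ a * p.2.1 ^ b / (1 + p.2.2) ^ c :=
    fun i => (g i).2
  choose A B C h1 h2 h3 h4 using hgi
  refine ⟨n, r, A, B, C, fun i => ⟨h1 i, h2 i, h3 i⟩, fun x y z => ?_⟩
  have := congrFun hq (x, y, z)
  rw [← this]
  simp only [Finset.sum_apply, Pi.smul_apply, smul_eq_mul]
  exact Finset.sum_congr rfl fun i _ => by rw [h4 i]

end Helpers

/-- exactness at R^{(1)}_k: if v = (w₁, w₂, 0) + ∇q ∈ R^{(1)}_k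
(with w₁ ∈ Q_{k+1}^{[k−1,k]}, w₂ ∈ Q_{k+1}^{[k,k−1]}, q ∈ Q_k^{[k,k]}) has
vanishing curl on U∞, then v = ∇u on U∞ for some u ∈ Q_k^{[k,k]}. -/
theorem stmt_16 (k : ℕ) (hk : 1 ≤ k) (v1 v2 v3 : (ℝ × ℝ × ℝ) → ℝ)
    (hv : ∃ w1 ∈ QB (k + 1) ((k : ℤ) - 1) k, ∃ w2 ∈ QB (k + 1) k ((k : ℤ) - 1),
      ∃ q ∈ QB k k k,
        (∀ p ∈ Uinf, v1 p = w1 p + Dx q p) ∧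
        (∀ p ∈ Uinf, v2 p = w2 p + Dy q p) ∧
        (∀ p ∈ Uinf, v3 p = Dz q p))
    (hcurl : ∀ p ∈ Uinf,
      Dy v3 p - Dz v2 p = 0 ∧ Dz v1 p - Dx v3 p = 0 ∧ Dx v2 p - Dy v1 p = 0) :
    ∃ u ∈ QB k k k, ∀ p ∈ Uinf,
      v1 p = Dx u p ∧ v2 p = Dy u p ∧ v3 p = Dz u p := by
  obtain ⟨w1, hw1, w2, hw2, q, hq, hv1, hv2, hv3⟩ := hv
  obtain ⟨n1, r1, A1, B1, C1, hb1, hr1⟩ := rep hw1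
  obtain ⟨n2, r2, A2, B2, C2, hb2, hr2⟩ := rep hw2
  obtain ⟨n, r, A, B, C, hb, hrq⟩ := rep hq
  have hC1 : ∀ i, 1 ≤ C1 i := by
    intro i
    have h := (hb1 i).2.1
    omega
  have hC2 : ∀ i, 1 ≤ C2 i := by
    intro i
    have h := (hb2 i).2.2
    omega
  -- global formula for Dx q
  have hDxq : ∀ x' y' z' : ℝ, Dx q (x', y', z')
      = ∑ i, (A i : ℝ) * x' ^ (A i - 1) * (r i * (y' ^ B i / (1 + z') ^ C i)) := by
    intro x' y' z'
    show deriv (fun t => q (t, y', z')) x' = _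
    have e : (fun t => q (t, y', z'))
        = fun t => ∑ i, t ^ A i * (r i * (y' ^ B i / (1 + z') ^ C i)) := by
      funext t
      rw [hrq t y' z']
      exact Finset.sum_congr rfl fun i _ => by ring
    rw [e]
    exact (hdx_gen n _ A x').deriv
  -- global formula for Dy q
  have hDyq : ∀ x' y' z' : ℝ, Dy q (x', y', z')
      = ∑ i, (B i : ℝ) * y' ^ (B i - 1) * (r i * (x' ^ A i / (1 + z') ^ C i)) := by
    intro x' y' z'
    show deriv (fun t => q (x', t, z')) y' = _
    have e : (fun t => q (x', t, z'))
        = fun t => ∑ i, t ^ B i * (r i * (x' ^ A i / (1 + z') ^ C i)) := by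
      funext t
      rw [hrq x' t z']
      exact Finset.sum_congr rfl fun i _ => by ring
    rw [e]
    exact (hdx_gen n _ B y').deriv
  -- formula for Dz q wherever 1 + z ≠ 0
  have hDzq : ∀ x' y' z' : ℝ, (1:ℝ) + z' ≠ 0 → Dz q (x', y', z')
      = ∑ i, (r i * (x' ^ A i * y' ^ B i)) * (-(C i : ℝ) / (1 + z') ^ (C i + 1)) := by
    intro x' y' z' h
    show deriv (fun t => q (x', y', t)) z' = _
    have e : (fun t => q (x', y', t))
        = fun t => ∑ i, (r i * (x' ^ A i * y' ^ B i)) / (1 + t) ^ C i := by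
      funext t
      rw [hrq x' y' t]
      exact Finset.sum_congr rfl fun i _ => by ring
    rw [e]
    exact (hdz_gen n _ C h).deriv
  -- w1 vanishes on Uinf
  have hw1zero : ∀ p ∈ Uinf, w1 p = 0 := by
    rintro ⟨x, y, z⟩ ⟨hx0, hx1, hy0, hy1, hz0⟩
    have key : ∀ z' : ℝ, 0 < z' →
        (∑ i, (r1 i * (x ^ A1 i * y ^ B1 i)) * (-(C1 i : ℝ) / (1 + z') ^ (C1 i + 1))) = 0 := by
      intro z' hz'
      have hmem : ((x, y, z') : ℝ × ℝ × ℝ) ∈ Uinf := ⟨hx0, hx1, hy0, hy1, hz'⟩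
      have h1z : (1:ℝ) + z' ≠ 0 := by positivity
      -- slice of v1 along z near z'
      have hsl : (fun t => v1 (x, y, t)) =ᶠ[nhds z']
          fun t => w1 (x, y, t) + Dx q (x, y, t) := by
        filter_upwards [Ioi_mem_nhds hz'] with t ht
        exact hv1 (x, y, t) ⟨hx0, hx1, hy0, hy1, ht⟩
      have e1 : (fun t => w1 (x, y, t))
          = fun t => ∑ i, (r1 i * (x ^ A1 i * y ^ B1 i)) / (1 + t) ^ C1 i := by
        funext t
        rw [hr1 x y t]
        exact Finset.sum_congr rfl fun i _ => by ring
      have h1 : HasDerivAt (fun t => w1 (x, y, t))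
          (∑ i, (r1 i * (x ^ A1 i * y ^ B1 i)) * (-(C1 i : ℝ) / (1 + z') ^ (C1 i + 1))) z' := by
        rw [e1]; exact hdz_gen n1 _ C1 h1z
      have e2 : (fun t => Dx q (x, y, t))
          = fun t => ∑ i, ((A i : ℝ) * x ^ (A i - 1) * r i * y ^ B i) / (1 + t) ^ C i := by
        funext t
        rw [hDxq x y t]
        exact Finset.sum_congr rfl fun i _ => by ring
      have h2 : HasDerivAt (fun t => Dx q (x, y, t))
          (∑ i, ((A i : ℝ) * x ^ (A i - 1) * r i * y ^ B i)
            * (-(C i : ℝ) / (1 + z') ^ (C i + 1))) z' := by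
        rw [e2]; exact hdz_gen n _ C h1z
      have hDzv1 : Dz v1 (x, y, z')
          = (∑ i, (r1 i * (x ^ A1 i * y ^ B1 i)) * (-(C1 i : ℝ) / (1 + z') ^ (C1 i + 1)))
          + ∑ i, ((A i : ℝ) * x ^ (A i - 1) * r i * y ^ B i)
              * (-(C i : ℝ) / (1 + z') ^ (C i + 1)) := by
        show deriv (fun t => v1 (x, y, t)) z' = _
        rw [hsl.deriv_eq]
        exact (h1.add h2).deriv
      -- x-slice of v3
      have hsl3 : (fun t => v3 (t, y, z')) =ᶠ[nhds x]
          fun t => ∑ i, t ^ A i * (r i * y ^ B i * (-(C i : ℝ) / (1 + z') ^ (C i + 1))) := by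
        filter_upwards [Ioo_mem_nhds hx0 hx1] with t ht
        rw [hv3 (t, y, z') ⟨ht.1, ht.2, hy0, hy1, hz'⟩, hDzq t y z' h1z]
        exact Finset.sum_congr rfl fun i _ => by ring
      have hDxv3 : Dx v3 (x, y, z')
          = ∑ i, (A i : ℝ) * x ^ (A i - 1)
              * (r i * y ^ B i * (-(C i : ℝ) / (1 + z') ^ (C i + 1))) := by
        show deriv (fun t => v3 (t, y, z')) x = _
        rw [hsl3.deriv_eq]
        exact (hdx_gen n _ A x).deriv
      have hc := (hcurl (x, y, z') hmem).2.1
      rw [hDzv1, hDxv3] at hc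
      have hTT : (∑ i, ((A i : ℝ) * x ^ (A i - 1) * r i * y ^ B i)
            * (-(C i : ℝ) / (1 + z') ^ (C i + 1)))
          = ∑ i, (A i : ℝ) * x ^ (A i - 1)
              * (r i * y ^ B i * (-(C i : ℝ) / (1 + z') ^ (C i + 1))) :=
        Finset.sum_congr rfl fun i _ => by ring
      rw [hTT] at hc
      linarith
    have h0 := const_zero n1 (fun i => r1 i * (x ^ A1 i * y ^ B1 i)) C1 hC1 key z hz0
    rw [hr1 x y z]
    rw [← h0]
    exact Finset.sum_congr rfl fun i _ => by ring
  -- w2 vanishes on Uinf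
  have hw2zero : ∀ p ∈ Uinf, w2 p = 0 := by
    rintro ⟨x, y, z⟩ ⟨hx0, hx1, hy0, hy1, hz0⟩
    have key : ∀ z' : ℝ, 0 < z' →
        (∑ i, (r2 i * (x ^ A2 i * y ^ B2 i)) * (-(C2 i : ℝ) / (1 + z') ^ (C2 i + 1))) = 0 := by
      intro z' hz'
      have hmem : ((x, y, z') : ℝ × ℝ × ℝ) ∈ Uinf := ⟨hx0, hx1, hy0, hy1, hz'⟩
      have h1z : (1:ℝ) + z' ≠ 0 := by positivity
      have hsl : (fun t => v2 (x, y, t)) =ᶠ[nhds z']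
          fun t => w2 (x, y, t) + Dy q (x, y, t) := by
        filter_upwards [Ioi_mem_nhds hz'] with t ht
        exact hv2 (x, y, t) ⟨hx0, hx1, hy0, hy1, ht⟩
      have e1 : (fun t => w2 (x, y, t))
          = fun t => ∑ i, (r2 i * (x ^ A2 i * y ^ B2 i)) / (1 + t) ^ C2 i := by
        funext t
        rw [hr2 x y t]
        exact Finset.sum_congr rfl fun i _ => by ring
      have h1 : HasDerivAt (fun t => w2 (x, y, t))
          (∑ i, (r2 i * (x ^ A2 i * y ^ B2 i)) * (-(C2 i : ℝ) / (1 + z') ^ (C2 i + 1))) z' := by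
        rw [e1]; exact hdz_gen n2 _ C2 h1z
      have e2 : (fun t => Dy q (x, y, t))
          = fun t => ∑ i, ((B i : ℝ) * y ^ (B i - 1) * r i * x ^ A i) / (1 + t) ^ C i := by
        funext t
        rw [hDyq x y t]
        exact Finset.sum_congr rfl fun i _ => by ring
      have h2 : HasDerivAt (fun t => Dy q (x, y, t))
          (∑ i, ((B i : ℝ) * y ^ (B i - 1) * r i * x ^ A i)
            * (-(C i : ℝ) / (1 + z') ^ (C i + 1))) z' := by
        rw [e2]; exact hdz_gen n _ C h1z
      have hDzv2 : Dz v2 (x, y, z')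
          = (∑ i, (r2 i * (x ^ A2 i * y ^ B2 i)) * (-(C2 i : ℝ) / (1 + z') ^ (C2 i + 1)))
          + ∑ i, ((B i : ℝ) * y ^ (B i - 1) * r i * x ^ A i)
              * (-(C i : ℝ) / (1 + z') ^ (C i + 1)) := by
        show deriv (fun t => v2 (x, y, t)) z' = _
        rw [hsl.deriv_eq]
        exact (h1.add h2).deriv
      have hsl3 : (fun t => v3 (x, t, z')) =ᶠ[nhds y]
          fun t => ∑ i, t ^ B i * (r i * x ^ A i * (-(C i : ℝ) / (1 + z') ^ (C i + 1))) := by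
        filter_upwards [Ioo_mem_nhds hy0 hy1] with t ht
        rw [hv3 (x, t, z') ⟨hx0, hx1, ht.1, ht.2, hz'⟩, hDzq x t z' h1z]
        exact Finset.sum_congr rfl fun i _ => by ring
      have hDyv3 : Dy v3 (x, y, z')
          = ∑ i, (B i : ℝ) * y ^ (B i - 1)
              * (r i * x ^ A i * (-(C i : ℝ) / (1 + z') ^ (C i + 1))) := by
        show deriv (fun t => v3 (x, t, z')) y = _
        rw [hsl3.deriv_eq]
        exact (hdx_gen n _ B y).deriv
      have hc := (hcurl (x, y, z') hmem).1
      rw [hDzv2, hDyv3] at hc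
      have hTT : (∑ i, ((B i : ℝ) * y ^ (B i - 1) * r i * x ^ A i)
            * (-(C i : ℝ) / (1 + z') ^ (C i + 1)))
          = ∑ i, (B i : ℝ) * y ^ (B i - 1)
              * (r i * x ^ A i * (-(C i : ℝ) / (1 + z') ^ (C i + 1))) :=
        Finset.sum_congr rfl fun i _ => by ring
      rw [hTT] at hc
      linarith
    have h0 := const_zero n2 (fun i => r2 i * (x ^ A2 i * y ^ B2 i)) C2 hC2 key z hz0
    rw [hr2 x y z]
    rw [← h0]
    exact Finset.sum_congr rfl fun i _ => by ring
  refine ⟨q, hq, fun p hp => ⟨?_, ?_, ?_⟩⟩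
  · rw [hv1 p hp, hw1zero p hp, zero_add]
  · rw [hv2 p hp, hw2zero p hp, zero_add]
  · exact hv3 p hp
end
end

section
/- For all natural numbers a, b and every integer d, the function f(ξ,η,ζ) = ξ^a η^b (1−ζ)^d (integer power, defined for ζ < 1) is square-integrable on K̂ with respect to Lebesgue measure if and only if a + b + d ≥ −1. -/
open MeasureTheory

noncomputable section

section AuxLemmas

open Set ENNReal

private lemma meas_zpow' (d : ℤ) : Measurable fun x : ℝ => x ^ d := by
  rcases d with n | n
  · simpa using measurable_id.pow_const n
  · have : Measurable fun x : ℝ => (x ^ (n + 1))⁻¹ :=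
      ((measurable_id.pow_const (n + 1)) : Measurable fun x : ℝ => x ^ (n + 1)).inv
    simpa [zpow_negSucc] using this

private lemma lint_pow' (n : ℕ) {c : ℝ} (hc : 0 ≤ c) :
    ∫⁻ x in Set.Icc (0:ℝ) c, ENNReal.ofReal (x ^ n) =
      ENNReal.ofReal (c ^ (n + 1) / (n + 1)) := by
  rw [← ofReal_integral_eq_lintegral_ofReal]
  · rw [MeasureTheory.integral_Icc_eq_integral_Ioc, ← intervalIntegral.integral_of_le hc,
      integral_pow]
    norm_num
  · exact (continuous_pow n).integrableOn_Icc
  · filter_upwards [ae_restrict_mem measurableSet_Icc] with x hx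
    exact pow_nonneg hx.1 n

private lemma lint_zpow_lt_top_iff' (k : ℤ) :
    (∫⁻ x in Set.Ioo (0:ℝ) 1, ENNReal.ofReal (x ^ k)) < ⊤ ↔ 0 ≤ k := by
  constructor
  · intro h
    by_contra hk
    push_neg at hk
    have hk1 : k ≤ -1 := by omega
    have hint : IntegrableOn (fun x : ℝ => x ^ k) (Set.Ioo (0:ℝ) 1) := by
      refine ⟨(meas_zpow' k).aestronglyMeasurable, ?_⟩
      rw [hasFiniteIntegral_iff_ofReal]
      · exact h
      · filter_upwards [ae_restrict_mem measurableSet_Ioo] with x hx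
        exact zpow_nonneg hx.1.le k
    have hinv : IntegrableOn (fun x : ℝ => x⁻¹) (Set.Ioo (0:ℝ) 1) := by
      apply hint.mono' measurable_inv.aestronglyMeasurable
      filter_upwards [ae_restrict_mem measurableSet_Ioo] with x hx
      have hx0 := hx.1
      have hx1 := hx.2
      rw [Real.norm_eq_abs, abs_of_nonneg (inv_nonneg.mpr hx0.le)]
      have hm : ((-k).toNat : ℤ) = -k := Int.toNat_of_nonneg (by omega)
      have hxm : x ^ ((-k).toNat) ≤ x := by
        calc x ^ ((-k).toNat) ≤ x ^ 1 :=
          pow_le_pow_of_le_one hx0.le hx1.le (by omega)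
        _ = x := pow_one x
      have hle : x⁻¹ ≤ (x ^ ((-k).toNat))⁻¹ := inv_anti₀ (pow_pos hx0 _) hxm
      calc x⁻¹ ≤ (x ^ ((-k).toNat))⁻¹ := hle
        _ = x ^ k := by
          rw [← zpow_natCast x ((-k).toNat), hm, zpow_neg, inv_inv]
    have hII : IntervalIntegrable (fun x : ℝ => x⁻¹) volume 0 1 := by
      rwa [intervalIntegrable_iff_integrableOn_Ioo_of_le zero_le_one]
    rw [intervalIntegrable_inv_iff] at hII
    rcases hII with h' | h'
    · norm_num at h'
    · exact h' (by rw [Set.uIcc_of_le zero_le_one]; exact Set.left_mem_Icc.mpr zero_le_one)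
  · intro hk
    have hb : ∀ x ∈ Set.Ioo (0:ℝ) 1, ENNReal.ofReal (x ^ k) ≤ 1 := by
      intro x hx
      rw [show (1:ℝ≥0∞) = ENNReal.ofReal 1 by simp]
      apply ENNReal.ofReal_le_ofReal
      lift k to ℕ using hk with n
      rw [zpow_natCast]
      exact pow_le_one₀ hx.1.le hx.2.le
    calc (∫⁻ x in Set.Ioo (0:ℝ) 1, ENNReal.ofReal (x ^ k))
        ≤ ∫⁻ _ in Set.Ioo (0:ℝ) 1, 1 := setLIntegral_mono measurable_const hb
      _ = volume (Set.Ioo (0:ℝ) 1) := by simp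
      _ < ⊤ := by simp

end AuxLemmas

/-- The reference pyramid K̂ ⊂ ℝ³ (coordinates (ξ, η, ζ)). -/
def Khat : Set (ℝ × ℝ × ℝ) :=
  {p | 0 ≤ p.2.2 ∧ p.2.2 ≤ 1 ∧ 0 ≤ p.1 ∧ p.1 ≤ 1 - p.2.2 ∧ 0 ≤ p.2.1 ∧ p.2.1 ≤ 1 - p.2.2}

/-- the function ξ^a η^b (1−ζ)^d (d ∈ ℤ) is square-integrable on K̂
if and only if a + b + d ≥ −1. -/
theorem stmt_17 (a b : ℕ) (d : ℤ) :
    IntegrableOn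
        (fun p : ℝ × ℝ × ℝ => (p.1 ^ a * p.2.1 ^ b * (1 - p.2.2) ^ d) ^ 2) Khat volume ↔
      -1 ≤ (a : ℤ) + b + d := by
  classical
  open Set ENNReal in
  set k : ℤ := 2*(a:ℤ) + 2*b + 2*d + 2 with hkdef
  set f : ℝ×ℝ×ℝ → ℝ := fun p => (p.1 ^ a * p.2.1 ^ b * (1 - p.2.2) ^ d) ^ 2 with hfdef
  have hζ : Measurable fun p : ℝ×ℝ×ℝ => p.2.2 := measurable_snd.snd
  have hη : Measurable fun p : ℝ×ℝ×ℝ => p.2.1 := measurable_snd.fst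
  have hw : Measurable fun p : ℝ×ℝ×ℝ => (1 - p.2.2) ^ d :=
    (meas_zpow' d).comp (measurable_const.sub hζ)
  have hfm : Measurable f :=
    (((measurable_fst.pow_const a).mul (hη.pow_const b)).mul hw).pow_const 2
  have hf0 : ∀ p, 0 ≤ f p := fun p => sq_nonneg _
  have h0ae : 0 ≤ᵐ[volume.restrict Khat] f := Filter.Eventually.of_forall hf0
  have key : IntegrableOn f Khat volume ↔
      (∫⁻ p in Khat, ENNReal.ofReal (f p)) < ⊤ :=
    ⟨fun h => (hasFiniteIntegral_iff_ofReal h0ae).mp h.2,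
      fun h => ⟨hfm.aestronglyMeasurable, (hasFiniteIntegral_iff_ofReal h0ae).mpr h⟩⟩
  rw [show (IntegrableOn (fun p : ℝ×ℝ×ℝ =>
      (p.1 ^ a * p.2.1 ^ b * (1 - p.2.2) ^ d) ^ 2) Khat volume) = IntegrableOn f Khat volume
    from rfl, key]
  -- sets
  set S1 : Set (ℝ×ℝ×ℝ) := {p | 0 ≤ p.1 ∧ p.1 ≤ 1 - p.2.2} with hS1def
  set S2 : Set (ℝ×ℝ×ℝ) := {p | 0 ≤ p.2.1 ∧ p.2.1 ≤ 1 - p.2.2} with hS2def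
  set S3 : Set (ℝ×ℝ×ℝ) := {p | 0 ≤ p.2.2 ∧ p.2.2 ≤ 1} with hS3def
  have hS1m : MeasurableSet S1 :=
    (measurableSet_le measurable_const measurable_fst).inter
      (measurableSet_le measurable_fst (measurable_const.sub hζ))
  have hS2m : MeasurableSet S2 :=
    (measurableSet_le measurable_const hη).inter
      (measurableSet_le hη (measurable_const.sub hζ))
  have hS3m : MeasurableSet S3 :=
    (measurableSet_le measurable_const hζ).inter (measurableSet_le hζ measurable_const)
  have hKe : ∀ p : ℝ×ℝ×ℝ, p ∈ Khat ↔ p ∈ S1 ∧ p ∈ S2 ∧ p ∈ S3 := by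
    intro p; simp only [Khat, hS1def, hS2def, hS3def, Set.mem_setOf_eq]; tauto
  have hKm : MeasurableSet Khat := by
    have : Khat = S1 ∩ (S2 ∩ S3) := by
      ext p
      rw [hKe p]
      simp [Set.mem_inter_iff, and_assoc]
    rw [this]; exact hS1m.inter (hS2m.inter hS3m)
  -- indicator decomposition
  set G : ℝ×ℝ×ℝ → ℝ≥0∞ := fun p =>
    S1.indicator (fun p => ENNReal.ofReal (p.1 ^ (a*2))) p *
      (S2.indicator (fun p => ENNReal.ofReal (p.2.1 ^ (b*2))) p *
        S3.indicator (fun p => ENNReal.ofReal (((1 - p.2.2) ^ d) ^ 2)) p) with hGdef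
  have hGm : Measurable G := by
    apply Measurable.mul
    · exact ((measurable_fst.pow_const (a*2)).ennreal_ofReal).indicator hS1m
    · exact Measurable.mul
        (((hη.pow_const (b*2)).ennreal_ofReal).indicator hS2m)
        (((hw.pow_const 2).ennreal_ofReal).indicator hS3m)
  have hpt : ∀ p, Khat.indicator (fun p => ENNReal.ofReal (f p)) p = G p := by
    intro p
    by_cases hK : p ∈ Khat
    · obtain ⟨h1, h2, h3⟩ := (hKe p).mp hK
      have hx : (0:ℝ) ≤ p.1 := h1.1
      have hy : (0:ℝ) ≤ p.2.1 := h2.1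
      have hfp : f p = p.1 ^ (a*2) * (p.2.1 ^ (b*2) * ((1 - p.2.2) ^ d) ^ 2) := by
        simp only [hfdef]
        rw [pow_mul, pow_mul]
        ring
      simp only [hGdef, Set.indicator_of_mem hK, Set.indicator_of_mem h1,
        Set.indicator_of_mem h2, Set.indicator_of_mem h3]
      rw [hfp, ENNReal.ofReal_mul (by positivity), ENNReal.ofReal_mul (by positivity)]
    · rw [Set.indicator_of_notMem hK]
      have hns : ¬(p ∈ S1 ∧ p ∈ S2 ∧ p ∈ S3) := fun h => hK ((hKe p).mpr h)
      rcases not_and_or.mp hns with h | h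
      · simp only [hGdef, Set.indicator_of_notMem h, zero_mul]
      · rcases not_and_or.mp h with h' | h'
        · simp only [hGdef, Set.indicator_of_notMem h', zero_mul, mul_zero]
        · simp only [hGdef, Set.indicator_of_notMem h', mul_zero]
  have hstep1 : (∫⁻ p in Khat, ENNReal.ofReal (f p)) = ∫⁻ p, G p := by
    rw [← lintegral_indicator hKm]
    exact lintegral_congr hpt
  -- first Fubini step
  set g3' : ℝ → ℝ := fun z => (1-z)^(a*2+1)/((a*2 : ℕ)+1 : ℝ) * ((1-z)^d)^2 with hg3def
  set T2 : Set (ℝ×ℝ) := {q | 0 ≤ q.1 ∧ q.1 ≤ 1 - q.2} with hT2def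
  set T3 : Set (ℝ×ℝ) := {q | 0 ≤ q.2 ∧ q.2 ≤ 1} with hT3def
  have hT2m : MeasurableSet T2 :=
    (measurableSet_le measurable_const measurable_fst).inter
      (measurableSet_le measurable_fst (measurable_const.sub measurable_snd))
  have hT3m : MeasurableSet T3 :=
    (measurableSet_le measurable_const measurable_snd).inter
      (measurableSet_le measurable_snd measurable_const)
  have hg3m : Measurable fun q : ℝ×ℝ => ENNReal.ofReal (g3' q.2) := by
    apply Measurable.ennreal_ofReal
    exact (((measurable_const.sub measurable_snd).pow_const (a*2+1)).div_const _).mul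
      (((meas_zpow' d).comp (measurable_const.sub measurable_snd)).pow_const 2)
  set G2 : ℝ×ℝ → ℝ≥0∞ := fun q =>
    T2.indicator (fun q => ENNReal.ofReal (q.1 ^ (b*2))) q *
      T3.indicator (fun q => ENNReal.ofReal (g3' q.2)) q with hG2def
  have hG2m : Measurable G2 :=
    (((measurable_fst.pow_const (b*2)).ennreal_ofReal).indicator hT2m).mul
      (hg3m.indicator hT3m)
  have hFa : Measurable fun x : ℝ => ENNReal.ofReal (x ^ (a*2)) := by
    exact (measurable_id.pow_const (a*2)).ennreal_ofReal
  have hFb : Measurable fun x : ℝ => ENNReal.ofReal (x ^ (b*2)) := by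
    exact (measurable_id.pow_const (b*2)).ennreal_ofReal
  have hInner1 : ∀ q : ℝ×ℝ, (∫⁻ x, G (x, q)) = G2 q := by
    intro q
    have hrw : ∀ x : ℝ, G (x, q) =
        (Set.Icc (0:ℝ) (1 - q.2)).indicator (fun x => ENNReal.ofReal (x ^ (a*2))) x *
          (T2.indicator (fun q => ENNReal.ofReal (q.1 ^ (b*2))) q *
            T3.indicator (fun q => ENNReal.ofReal (((1 - q.2) ^ d) ^ 2)) q) := by
      intro x
      simp only [hGdef, hS1def, hS2def, hS3def, hT2def, hT3def, Set.indicator_apply,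
        Set.mem_setOf_eq, Set.mem_Icc]
    calc (∫⁻ x, G (x, q))
        = ∫⁻ x, (Set.Icc (0:ℝ) (1 - q.2)).indicator
            (fun x => ENNReal.ofReal (x ^ (a*2))) x *
          (T2.indicator (fun q => ENNReal.ofReal (q.1 ^ (b*2))) q *
            T3.indicator (fun q => ENNReal.ofReal (((1 - q.2) ^ d) ^ 2)) q) :=
          lintegral_congr hrw
      _ = (∫⁻ x, (Set.Icc (0:ℝ) (1 - q.2)).indicator
            (fun x => ENNReal.ofReal (x ^ (a*2))) x) *
          (T2.indicator (fun q => ENNReal.ofReal (q.1 ^ (b*2))) q *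
            T3.indicator (fun q => ENNReal.ofReal (((1 - q.2) ^ d) ^ 2)) q) :=
          lintegral_mul_const _ (hFa.indicator measurableSet_Icc)
      _ = (∫⁻ x in Set.Icc (0:ℝ) (1 - q.2), ENNReal.ofReal (x ^ (a*2))) *
          (T2.indicator (fun q => ENNReal.ofReal (q.1 ^ (b*2))) q *
            T3.indicator (fun q => ENNReal.ofReal (((1 - q.2) ^ d) ^ 2)) q) := by
          rw [lintegral_indicator measurableSet_Icc]
      _ = G2 q := by
          by_cases hq3 : q ∈ T3
          · have hc : (0:ℝ) ≤ 1 - q.2 := by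
              have := hq3.2; linarith
            rw [lint_pow' _ hc]
            by_cases hq2 : q ∈ T2
            · simp only [hG2def, hg3def, Set.indicator_of_mem hq2, Set.indicator_of_mem hq3]
              rw [ENNReal.ofReal_mul (div_nonneg (pow_nonneg hc _) (by positivity))]
              ring
            · simp only [hG2def, Set.indicator_of_notMem hq2, zero_mul, mul_zero]
          · simp only [hG2def, Set.indicator_of_notMem hq3, mul_zero]
  -- second Fubini step
  set G3 : ℝ → ℝ≥0∞ := fun z =>
    (Set.Icc (0:ℝ) 1).indicator
      (fun z => ENNReal.ofReal ((1-z)^(b*2+1)/((b*2 : ℕ)+1 : ℝ)) *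
        ENNReal.ofReal (g3' z)) z with hG3def
  have hInner2 : ∀ z : ℝ, (∫⁻ y, G2 (y, z)) = G3 z := by
    intro z
    have hrw : ∀ y : ℝ, G2 (y, z) =
        (Set.Icc (0:ℝ) (1 - z)).indicator (fun y => ENNReal.ofReal (y ^ (b*2))) y *
          (Set.Icc (0:ℝ) 1).indicator (fun z => ENNReal.ofReal (g3' z)) z := by
      intro y
      simp only [hG2def, hT2def, hT3def, Set.indicator_apply, Set.mem_setOf_eq, Set.mem_Icc]
    calc (∫⁻ y, G2 (y, z))
        = ∫⁻ y, (Set.Icc (0:ℝ) (1 - z)).indicator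
            (fun y => ENNReal.ofReal (y ^ (b*2))) y *
          (Set.Icc (0:ℝ) 1).indicator (fun z => ENNReal.ofReal (g3' z)) z :=
          lintegral_congr hrw
      _ = (∫⁻ y, (Set.Icc (0:ℝ) (1 - z)).indicator
            (fun y => ENNReal.ofReal (y ^ (b*2))) y) *
          (Set.Icc (0:ℝ) 1).indicator (fun z => ENNReal.ofReal (g3' z)) z :=
          lintegral_mul_const _ (hFb.indicator measurableSet_Icc)
      _ = (∫⁻ y in Set.Icc (0:ℝ) (1 - z), ENNReal.ofReal (y ^ (b*2))) *
          (Set.Icc (0:ℝ) 1).indicator (fun z => ENNReal.ofReal (g3' z)) z := by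
          rw [lintegral_indicator measurableSet_Icc]
      _ = G3 z := by
          by_cases hz : z ∈ Set.Icc (0:ℝ) 1
          · have hc : (0:ℝ) ≤ 1 - z := by have := hz.2; linarith
            rw [lint_pow' _ hc]
            simp only [hG3def, Set.indicator_of_mem hz]
          · simp only [hG3def, Set.indicator_of_notMem hz, mul_zero]
  have hstep2 : (∫⁻ p, G p) = ∫⁻ z, G3 z := by
    calc (∫⁻ p, G p) = ∫⁻ q : ℝ×ℝ, ∫⁻ x, G (x, q) := by
          rw [MeasureTheory.Measure.volume_eq_prod]
          exact lintegral_prod_symm' G hGm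
      _ = ∫⁻ q : ℝ×ℝ, G2 q := lintegral_congr hInner1
      _ = ∫⁻ z : ℝ, ∫⁻ y, G2 (y, z) := by
          rw [MeasureTheory.Measure.volume_eq_prod]
          exact lintegral_prod_symm' G2 hG2m
      _ = ∫⁻ z, G3 z := lintegral_congr hInner2
  -- compute last integral
  set c0 : ℝ := 1/((b*2 : ℕ)+1 : ℝ) * (1/((a*2 : ℕ)+1 : ℝ)) with hc0def
  have hc0pos : 0 < c0 := by positivity
  have hstep3 : (∫⁻ z, G3 z) =
      ENNReal.ofReal c0 * ∫⁻ u in Set.Ioo (0:ℝ) 1, ENNReal.ofReal (u ^ k) := by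
    have e1 : (∫⁻ z, G3 z) = ∫⁻ z in Set.Icc (0:ℝ) 1,
        ENNReal.ofReal ((1-z)^(b*2+1)/((b*2 : ℕ)+1 : ℝ)) * ENNReal.ofReal (g3' z) := by
      rw [hG3def, lintegral_indicator measurableSet_Icc]
    have e2 : (∫⁻ z in Set.Icc (0:ℝ) 1,
        ENNReal.ofReal ((1-z)^(b*2+1)/((b*2 : ℕ)+1 : ℝ)) * ENNReal.ofReal (g3' z)) =
        ∫⁻ z in Set.Ioo (0:ℝ) 1,
        ENNReal.ofReal ((1-z)^(b*2+1)/((b*2 : ℕ)+1 : ℝ)) * ENNReal.ofReal (g3' z) :=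
      (setLIntegral_congr Ioo_ae_eq_Icc).symm
    have e3 : (∫⁻ z in Set.Ioo (0:ℝ) 1,
        ENNReal.ofReal ((1-z)^(b*2+1)/((b*2 : ℕ)+1 : ℝ)) * ENNReal.ofReal (g3' z)) =
        ∫⁻ z in Set.Ioo (0:ℝ) 1, ENNReal.ofReal c0 * ENNReal.ofReal ((1-z) ^ k) := by
      apply setLIntegral_congr_fun measurableSet_Ioo
      intro z hz
      have hwpos : (0:ℝ) < 1 - z := by have := hz.2; linarith
      have hA : (0:ℝ) ≤ (1-z)^(b*2+1)/((b*2 : ℕ)+1 : ℝ) :=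
        div_nonneg (pow_nonneg hwpos.le _) (by positivity)
      beta_reduce
      rw [← ENNReal.ofReal_mul hA, ← ENNReal.ofReal_mul hc0pos.le]
      congr 1
      have hsq : ((1-z) ^ d) ^ 2 = (1-z) ^ (d * 2) := by
        rw [← zpow_natCast ((1-z) ^ d) 2, ← zpow_mul]
        norm_num
      have ek : (1-z) ^ k = (1-z)^(a*2+1) * (1-z)^(b*2+1) * ((1-z) ^ d)^2 := by
        rw [hsq, ← zpow_natCast (1-z) (a*2+1), ← zpow_natCast (1-z) (b*2+1),
          ← zpow_add₀ hwpos.ne', ← zpow_add₀ hwpos.ne']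
        congr 1
        push_cast
        ring
      rw [ek, hg3def, hc0def]
      have ha0 : ((a*2 : ℕ)+1 : ℝ) ≠ 0 := by positivity
      have hb0 : ((b*2 : ℕ)+1 : ℝ) ≠ 0 := by positivity
      field_simp
    have hm4 : Measurable fun z : ℝ => ENNReal.ofReal ((1-z) ^ k) := by
      exact ((meas_zpow' k).comp (measurable_const.sub measurable_id)).ennreal_ofReal
    have e4 : (∫⁻ z in Set.Ioo (0:ℝ) 1,
        ENNReal.ofReal c0 * ENNReal.ofReal ((1-z) ^ k)) =
        ENNReal.ofReal c0 * ∫⁻ z in Set.Ioo (0:ℝ) 1, ENNReal.ofReal ((1-z) ^ k) :=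
      lintegral_const_mul _ hm4
    have e5 : (∫⁻ z in Set.Ioo (0:ℝ) 1, ENNReal.ofReal ((1-z) ^ k)) =
        ∫⁻ u in Set.Ioo (0:ℝ) 1, ENNReal.ofReal (u ^ k) := by
      have hmp : MeasurePreserving (fun z : ℝ => 1 - z) volume volume :=
        Measure.measurePreserving_sub_left volume 1
      have hpre : (fun z : ℝ => 1 - z) ⁻¹' (Set.Ioo 0 1) = Set.Ioo (0:ℝ) 1 := by
        ext z
        simp only [Set.mem_preimage, Set.mem_Ioo]
        constructor <;> (rintro ⟨u1, u2⟩; constructor <;> linarith)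
      calc (∫⁻ z in Set.Ioo (0:ℝ) 1, ENNReal.ofReal ((1-z) ^ k))
          = ∫⁻ z in (fun z : ℝ => 1 - z) ⁻¹' (Set.Ioo 0 1),
              ENNReal.ofReal ((1-z) ^ k) := by rw [hpre]
        _ = ∫⁻ u in Set.Ioo (0:ℝ) 1, ENNReal.ofReal (u ^ k) :=
            hmp.setLIntegral_comp_preimage measurableSet_Ioo ((meas_zpow' k).ennreal_ofReal)
    rw [e1, e2, e3, e4, e5]
  rw [hstep1, hstep2, hstep3]
  have hfin : ENNReal.ofReal c0 * (∫⁻ u in Set.Ioo (0:ℝ) 1, ENNReal.ofReal (u ^ k)) < ⊤ ↔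
      (∫⁻ u in Set.Ioo (0:ℝ) 1, ENNReal.ofReal (u ^ k)) < ⊤ := by
    constructor
    · intro h
      rcases ENNReal.mul_lt_top_iff.mp h with ⟨_, h2⟩ | h0 | h0
      · exact h2
      · exact absurd h0 (ENNReal.ofReal_pos.mpr hc0pos).ne'
      · rw [h0]; exact ENNReal.zero_lt_top
    · intro h
      exact ENNReal.mul_lt_top ENNReal.ofReal_lt_top h
  rw [hfin, lint_zpow_lt_top_iff', hkdef]
  omega

end
end

section
/- Let v(ξ,η,ζ) = ξη/(1−ζ), the H¹-conforming pyramidal shape function associated with the base vertex (1,1,0). For every fixed (ξ,η) and every ζ < 1, the third derivative of the map ζ ↦ v(ξ,η,ζ) equals 6ξη/(1−ζ)⁴, and this third partial derivative is not square-integrable on K̂: ∫_{K̂} (6ξη/(1−ζ)⁴)² d(ξ,η,ζ) = +∞. In particular, ∂³v/∂ζ³ ∉ L²(K̂). -/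
open MeasureTheory

noncomputable section

/-- The H¹ shape function of the base vertex (1,1,0): v(ξ,η,ζ) = ξη/(1−ζ). -/
def vShape (p : ℝ × ℝ × ℝ) : ℝ := p.1 * p.2.1 / (1 - p.2.2)

/- ### Part 1 : derivative computations -/

lemma hasDerivAt_aux (c : ℝ) (n : ℕ) {z : ℝ} (hz : z ≠ 1) :
    HasDerivAt (fun z : ℝ => c / (1 - z) ^ n) (n * c / (1 - z) ^ (n + 1)) z := by
  have h1 : (1 : ℝ) - z ≠ 0 := sub_ne_zero.mpr (Ne.symm hz)
  have hu : HasDerivAt (fun z : ℝ => (1 - z) ^ n)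
      ((n : ℝ) * (1 - z) ^ (n - 1) * (-1)) z :=
    ((hasDerivAt_id z).const_sub 1).pow n
  have := (hasDerivAt_const z c).div hu (pow_ne_zero n h1)
  simp only [Pi.div_def] at this
  refine this.congr_deriv (Eq.symm ?_)
  rcases Nat.eq_zero_or_pos n with h | h
  · subst h; simp
  · have hn : n - 1 + (n + 1) = n * 2 := by omega
    have hpow : ((1 - z) ^ n) ^ 2 = (1 - z) ^ (n - 1) * (1 - z) ^ (n + 1) := by
      rw [← pow_add, hn, pow_mul]
    rw [hpow]
    field_simp
    ring

lemma third_deriv_eq (ξ η ζ : ℝ) (hζ : ζ < 1) :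
    iteratedDeriv 3 (fun z : ℝ => vShape (ξ, η, z)) ζ = 6 * ξ * η / (1 - ζ) ^ 4 := by
  have hmem : ({1}ᶜ : Set ℝ) ∈ nhds ζ :=
    (isOpen_compl_singleton).mem_nhds (by simpa using hζ.ne)
  set c := ξ * η with hc
  have hfun : (fun z : ℝ => vShape (ξ, η, z)) = fun z : ℝ => c / (1 - z) ^ 1 := by
    funext z; simp [vShape, hc]
  rw [hfun]
  rw [show (3 : ℕ) = 2 + 1 from rfl, iteratedDeriv_succ, iteratedDeriv_succ,
    iteratedDeriv_one]
  have h1 : deriv (fun z : ℝ => c / (1 - z) ^ 1) =ᶠ[nhds ζ]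
      (fun z : ℝ => c / (1 - z) ^ 2) := by
    refine Filter.eventually_of_mem hmem fun z hz => ?_
    rw [(hasDerivAt_aux c 1 hz).deriv]; norm_num
  have h2 : deriv (fun z : ℝ => c / (1 - z) ^ 2) =ᶠ[nhds ζ]
      (fun z : ℝ => 2 * c / (1 - z) ^ 3) := by
    refine Filter.eventually_of_mem hmem fun z hz => ?_
    rw [(hasDerivAt_aux c 2 hz).deriv]; norm_num
  have h12 : deriv (deriv (fun z : ℝ => c / (1 - z) ^ 1)) =ᶠ[nhds ζ]
      (fun z : ℝ => 2 * c / (1 - z) ^ 3) := h1.deriv.trans h2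
  rw [h12.deriv_eq]
  rw [(hasDerivAt_aux (2 * c) 3 (show ζ ≠ 1 from hζ.ne)).deriv]
  push_cast
  ring

/- ### Part 2 : the integral diverges -/

/-- The lower-bound region inside the pyramid. -/
def Sset : Set (ℝ × ℝ × ℝ) :=
  {p | (1 - p.2.2) / 2 ≤ p.1 ∧ p.1 ≤ 1 - p.2.2 ∧ (1 - p.2.2) / 2 ≤ p.2.1 ∧
    p.2.1 ≤ 1 - p.2.2 ∧ p.2.2 ∈ Set.Ico (1/2 : ℝ) 1}

def Afun (ζ x : ℝ) : ENNReal := (Set.Icc ((1 - ζ)/2) (1 - ζ)).indicator 1 x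

def Cfun (ζ : ℝ) : ENNReal :=
  (Set.Ico (1/2 : ℝ) 1).indicator (fun z => ENNReal.ofReal ((9/4) / (1 - z) ^ 4)) ζ

def Lfun (p : ℝ × ℝ × ℝ) : ENNReal := Afun p.2.2 p.1 * (Afun p.2.2 p.2.1 * Cfun p.2.2)

lemma measurable_Afun_slice (ζ : ℝ) : Measurable (Afun ζ) :=
  measurable_const.indicator measurableSet_Icc

lemma lintegral_Afun (ζ : ℝ) : ∫⁻ x, Afun ζ x = ENNReal.ofReal ((1 - ζ)/2) := by
  unfold Afun
  rw [lintegral_indicator_one measurableSet_Icc, Real.volume_Icc]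
  congr 1; ring

lemma Lfun_eq : Lfun = Sset.indicator (fun p => ENNReal.ofReal ((9/4) / (1 - p.2.2) ^ 4)) := by
  funext p
  obtain ⟨ξ, η, ζ⟩ := p
  show Afun ζ ξ * (Afun ζ η * Cfun ζ) = _
  unfold Afun Cfun
  by_cases h1 : ξ ∈ Set.Icc ((1 - ζ)/2) (1 - ζ)
  · by_cases h2 : η ∈ Set.Icc ((1 - ζ)/2) (1 - ζ)
    · by_cases h3 : ζ ∈ Set.Ico (1/2 : ℝ) 1
      · have hS : ((ξ, η, ζ) : ℝ × ℝ × ℝ) ∈ Sset :=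
          ⟨h1.1, h1.2, h2.1, h2.2, h3⟩
        rw [Set.indicator_of_mem h1, Set.indicator_of_mem h2, Set.indicator_of_mem h3,
          Set.indicator_of_mem hS]
        simp
      · have hS : ((ξ, η, ζ) : ℝ × ℝ × ℝ) ∉ Sset := fun h => h3 h.2.2.2.2
        rw [Set.indicator_of_notMem h3, Set.indicator_of_notMem hS, mul_zero, mul_zero]
    · have hS : ((ξ, η, ζ) : ℝ × ℝ × ℝ) ∉ Sset := fun h => h2 ⟨h.2.2.1, h.2.2.2.1⟩
      rw [Set.indicator_of_notMem h2, Set.indicator_of_notMem hS, zero_mul, mul_zero]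
  · have hS : ((ξ, η, ζ) : ℝ × ℝ × ℝ) ∉ Sset := fun h => h1 ⟨h.1, h.2.1⟩
    rw [Set.indicator_of_notMem h1, Set.indicator_of_notMem hS, zero_mul]

lemma m1 : Measurable fun p : ℝ × ℝ × ℝ => p.1 := measurable_fst
lemma m2 : Measurable fun p : ℝ × ℝ × ℝ => p.2.1 := measurable_snd.fst
lemma m3 : Measurable fun p : ℝ × ℝ × ℝ => p.2.2 := measurable_snd.snd
lemma m4 : Measurable fun p : ℝ × ℝ × ℝ => 1 - p.2.2 := measurable_const.sub m3
lemma m5 : Measurable fun p : ℝ × ℝ × ℝ => (1 - p.2.2) / 2 := m4.div_const 2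

lemma measurableSet_Sset : MeasurableSet Sset := by
  have : Sset = {p : ℝ × ℝ × ℝ | (1 - p.2.2) / 2 ≤ p.1} ∩ ({p | p.1 ≤ 1 - p.2.2} ∩
      ({p | (1 - p.2.2) / 2 ≤ p.2.1} ∩ ({p | p.2.1 ≤ 1 - p.2.2} ∩
      {p | p.2.2 ∈ Set.Ico (1/2 : ℝ) 1}))) := rfl
  rw [this]
  exact (measurableSet_le m5 m1).inter ((measurableSet_le m1 m4).inter
    ((measurableSet_le m5 m2).inter ((measurableSet_le m2 m4).inter
    (m3 measurableSet_Ico))))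

lemma measurable_Lfun : Measurable Lfun := by
  rw [Lfun_eq]
  exact (Measurable.ennreal_ofReal (by fun_prop)).indicator measurableSet_Sset

lemma measurableSet_Khat : MeasurableSet Khat := by
  have : Khat = {p : ℝ × ℝ × ℝ | 0 ≤ p.2.2} ∩ ({p | p.2.2 ≤ 1} ∩ ({p | 0 ≤ p.1} ∩
      ({p | p.1 ≤ 1 - p.2.2} ∩ ({p | 0 ≤ p.2.1} ∩ {p | p.2.1 ≤ 1 - p.2.2})))) := rfl
  rw [this]
  exact (measurableSet_le measurable_const m3).inter
    ((measurableSet_le m3 measurable_const).inter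
    ((measurableSet_le measurable_const m1).inter ((measurableSet_le m1 m4).inter
    ((measurableSet_le measurable_const m2).inter (measurableSet_le m2 m4)))))

lemma Lfun_le (p : ℝ × ℝ × ℝ) :
    Lfun p ≤ Khat.indicator (fun p : ℝ × ℝ × ℝ =>
      ENNReal.ofReal ((6 * p.1 * p.2.1 / (1 - p.2.2) ^ 4) ^ 2)) p := by
  rw [Lfun_eq]
  obtain ⟨ξ, η, ζ⟩ := p
  by_cases hS : ((ξ, η, ζ) : ℝ × ℝ × ℝ) ∈ Sset
  · have hS2 := hS
    obtain ⟨h1, h2, h3, h4, h5a, h5b⟩ :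
        (1 - ζ) / 2 ≤ ξ ∧ ξ ≤ 1 - ζ ∧ (1 - ζ) / 2 ≤ η ∧ η ≤ 1 - ζ ∧
          (1/2 : ℝ) ≤ ζ ∧ ζ < 1 := hS2
    have ht : (0:ℝ) < 1 - ζ := by linarith
    have hK : ((ξ, η, ζ) : ℝ × ℝ × ℝ) ∈ Khat :=
      ⟨by linarith, by linarith, by linarith, by linarith, by linarith, by linarith⟩
    rw [Set.indicator_of_mem hS, Set.indicator_of_mem hK]
    apply ENNReal.ofReal_le_ofReal
    show (9/4 : ℝ) / (1 - ζ) ^ 4 ≤ (6 * ξ * η / (1 - ζ) ^ 4) ^ 2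
    rw [div_pow, div_le_div_iff₀ (by positivity) (by positivity)]
    have hξη : (1 - ζ)/2 * ((1 - ζ)/2) ≤ ξ * η :=
      mul_le_mul h1 h3 (by positivity) (by linarith)
    have key : ((1 - ζ)/2 * ((1 - ζ)/2)) * ((1 - ζ)/2 * ((1 - ζ)/2)) ≤ (ξ * η) * (ξ * η) :=
      mul_le_mul hξη hξη (by positivity) (le_trans (by positivity) hξη)
    nlinarith [key, pow_pos ht 4, pow_nonneg ht.le 4]
  · rw [Set.indicator_of_notMem hS]
    exact zero_le

lemma one_dim : ∫⁻ ζ in Set.Ico (1/2 : ℝ) 1, ENNReal.ofReal ((9/16) / (1 - ζ) ^ 2) = ⊤ := by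
  have hmp : MeasurePreserving (fun t : ℝ => 1 - t) volume volume :=
    Measure.measurePreserving_sub_left volume 1
  have hemb : MeasurableEmbedding (fun t : ℝ => 1 - t) :=
    (Homeomorph.subLeft (1 : ℝ)).measurableEmbedding
  have himg : (fun t : ℝ => 1 - t) '' Set.Ioc 0 (1/2) = Set.Ico (1/2 : ℝ) 1 := by
    rw [Set.image_const_sub_Ioc]; norm_num
  rw [← himg, ← hmp.setLIntegral_comp_emb hemb]
  simp only [sub_sub_cancel]
  by_contra h
  have hne : ∫⁻ t in Set.Ioc (0:ℝ) (1/2), ENNReal.ofReal ((9/16) / t ^ 2) ≠ ⊤ := h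
  have hfm : Measurable fun t : ℝ => (9/16 : ℝ) / t ^ 2 :=
    measurable_const.div ((measurable_id.pow_const 2))
  have hint : IntegrableOn (fun t : ℝ => (9/16) / t ^ 2) (Set.Ioc (0:ℝ) (1/2)) :=
    (lintegral_ofReal_ne_top_iff_integrable hfm.aestronglyMeasurable
      (Filter.Eventually.of_forall fun t => by positivity)).mp hne
  have h16 : IntegrableOn (fun x : ℝ => 16/9 * ((9/16) / x ^ 2)) (Set.Ioo (0:ℝ) (1/2)) :=
    (hint.mono_set Set.Ioo_subset_Ioc_self).const_mul (16/9)
  have hint2 : IntegrableOn (fun t : ℝ => t ^ (-2 : ℝ)) (Set.Ioo (0:ℝ) (1/2)) := by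
    refine h16.congr_fun (fun t ht => ?_) measurableSet_Ioo
    have ht0 : (0:ℝ) < t := ht.1
    rw [Real.rpow_neg ht0.le, show ((2:ℝ)) = ((2:ℕ):ℝ) by norm_num, Real.rpow_natCast]
    field_simp
  have := (intervalIntegral.integrableOn_Ioo_rpow_iff (by norm_num : (0:ℝ) < 1/2)).mp hint2
  norm_num at this

lemma lintegral_Lfun : ∫⁻ p, Lfun p = ⊤ := by
  rw [show (volume : Measure (ℝ × ℝ × ℝ)) = volume.prod volume from rfl]
  rw [lintegral_prod_symm _ measurable_Lfun.aemeasurable]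
  have step1 : ∀ q : ℝ × ℝ, ∫⁻ ξ, Lfun (ξ, q)
      = ENNReal.ofReal ((1 - q.2)/2) * (Afun q.2 q.1 * Cfun q.2) := by
    intro q
    simp only [Lfun]
    rw [lintegral_mul_const _ (measurable_Afun_slice q.2), lintegral_Afun q.2, mul_comm]
  simp_rw [step1]
  rw [show (volume : Measure (ℝ × ℝ)) = volume.prod volume from rfl]
  have hmeas2 : Measurable fun q : ℝ × ℝ =>
      ENNReal.ofReal ((1 - q.2)/2) * (Afun q.2 q.1 * Cfun q.2) := by
    have h1 : Measurable fun q : ℝ × ℝ => Afun q.2 q.1 := by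
      have he : (fun q : ℝ × ℝ => Afun q.2 q.1)
          = Set.indicator {q : ℝ × ℝ | (1 - q.2)/2 ≤ q.1 ∧ q.1 ≤ 1 - q.2} 1 := by
        funext q
        by_cases h : q.1 ∈ Set.Icc ((1 - q.2)/2) (1 - q.2)
        · rw [Afun, Set.indicator_of_mem h, Set.indicator_of_mem
            (show q ∈ {q : ℝ × ℝ | (1 - q.2)/2 ≤ q.1 ∧ q.1 ≤ 1 - q.2} from ⟨h.1, h.2⟩)]
          rfl
        · rw [Afun, Set.indicator_of_notMem h, Set.indicator_of_notMem
            (show q ∉ {q : ℝ × ℝ | (1 - q.2)/2 ≤ q.1 ∧ q.1 ≤ 1 - q.2} from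
              fun hc => h ⟨hc.1, hc.2⟩)]
      rw [he]
      refine measurable_const.indicator ?_
      have ha : Measurable fun q : ℝ × ℝ => (1 - q.2)/2 :=
        (measurable_const.sub measurable_snd).div_const 2
      have hb : Measurable fun q : ℝ × ℝ => 1 - q.2 := measurable_const.sub measurable_snd
      exact (measurableSet_le ha measurable_fst).inter (measurableSet_le measurable_fst hb)
    have hC : Measurable Cfun := by
      refine Measurable.indicator ?_ measurableSet_Ico
      exact (measurable_const.div ((measurable_const.sub measurable_id).pow_const
        4)).ennreal_ofReal
    have h2 : Measurable fun q : ℝ × ℝ => Cfun q.2 := hC.comp measurable_snd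
    have h0 : Measurable fun q : ℝ × ℝ => ENNReal.ofReal ((1 - q.2)/2) :=
      ((measurable_const.sub measurable_snd).div_const 2).ennreal_ofReal
    exact h0.mul (h1.mul h2)
  rw [lintegral_prod_symm _ hmeas2.aemeasurable]
  have step2 : ∀ ζ : ℝ, (∫⁻ η, ENNReal.ofReal ((1 - ζ)/2) * (Afun ζ η * Cfun ζ))
      = ENNReal.ofReal ((1 - ζ)/2) * (ENNReal.ofReal ((1 - ζ)/2) * Cfun ζ) := by
    intro ζ
    rw [lintegral_const_mul _ ((measurable_Afun_slice ζ).mul_const _),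
      lintegral_mul_const _ (measurable_Afun_slice ζ), lintegral_Afun ζ]
  simp_rw [step2]
  have step3 : (fun ζ : ℝ => ENNReal.ofReal ((1 - ζ)/2) * (ENNReal.ofReal ((1 - ζ)/2) * Cfun ζ))
      = (Set.Ico (1/2 : ℝ) 1).indicator (fun ζ => ENNReal.ofReal ((9/16) / (1 - ζ) ^ 2)) := by
    funext ζ
    by_cases h : ζ ∈ Set.Ico (1/2 : ℝ) 1
    · have ht : (0:ℝ) < 1 - ζ := by linarith [h.2]
      rw [Cfun, Set.indicator_of_mem h, Set.indicator_of_mem h,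
        ← ENNReal.ofReal_mul (by positivity), ← ENNReal.ofReal_mul (by positivity)]
      congr 1
      field_simp
      ring
    · rw [Cfun, Set.indicator_of_notMem h, Set.indicator_of_notMem h, mul_zero, mul_zero]
  rw [step3, lintegral_indicator measurableSet_Ico]
  exact one_dim

lemma part2 : ∫⁻ p in Khat, ENNReal.ofReal ((6 * p.1 * p.2.1 / (1 - p.2.2) ^ 4) ^ 2) = ⊤ := by
  rw [← lintegral_indicator measurableSet_Khat]
  have hle := lintegral_mono (μ := volume) Lfun_le
  rw [lintegral_Lfun] at hle
  exact top_le_iff.mp hle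

/- ### Main theorem -/

/-- the third ζ-derivative of v = ξη/(1−ζ) equals 6ξη/(1−ζ)⁴ (for ζ < 1),
its square has infinite integral over K̂, and hence ∂³v/∂ζ³ ∉ L²(K̂). -/
theorem stmt_18 :
    (∀ ξ η ζ : ℝ, ζ < 1 →
      iteratedDeriv 3 (fun z : ℝ => vShape (ξ, η, z)) ζ = 6 * ξ * η / (1 - ζ) ^ 4) ∧
    (∫⁻ p in Khat, ENNReal.ofReal ((6 * p.1 * p.2.1 / (1 - p.2.2) ^ 4) ^ 2) = ⊤) ∧
    ¬ MemLp (fun p : ℝ × ℝ × ℝ => iteratedDeriv 3 (fun z : ℝ => vShape (p.1, p.2.1, z)) p.2.2)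
        2 (volume.restrict Khat) := by
  refine ⟨fun ξ η ζ hζ => third_deriv_eq ξ η ζ hζ, part2, ?_⟩
  intro hm
  set f := fun p : ℝ × ℝ × ℝ =>
    iteratedDeriv 3 (fun z : ℝ => vShape (p.1, p.2.1, z)) p.2.2 with hf
  set g := fun p : ℝ × ℝ × ℝ => 6 * p.1 * p.2.1 / (1 - p.2.2) ^ 4 with hg
  have hnull : volume {p : ℝ × ℝ × ℝ | p.2.2 = 1} = 0 := by
    have hset : {p : ℝ × ℝ × ℝ | p.2.2 = 1}
        = (Set.univ : Set ℝ) ×ˢ ((Set.univ : Set ℝ) ×ˢ ({1} : Set ℝ)) := by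
      ext p
      simp only [Set.mem_setOf_eq, Set.mem_prod, Set.mem_univ, true_and,
        Set.mem_singleton_iff]
    rw [hset, show (volume : Measure (ℝ × ℝ × ℝ)) = volume.prod (volume.prod volume) from rfl,
      Measure.prod_prod, Measure.prod_prod]
    simp
  have hae : f =ᵐ[volume.restrict Khat] g := by
    rw [Filter.EventuallyEq, ae_iff]
    rw [Measure.restrict_apply' measurableSet_Khat]
    refine measure_mono_null ?_ hnull
    intro p hp
    obtain ⟨hp1, hp2⟩ := hp
    by_contra hne
    have hlt : p.2.2 < 1 := lt_of_le_of_ne hp2.2.1 hne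
    exact hp1 (third_deriv_eq p.1 p.2.1 p.2.2 hlt)
  have hlt : ∫⁻ p, ((‖f p‖₊ : ENNReal)) ^ ((2:ENNReal).toReal) ∂(volume.restrict Khat) < ⊤ :=
    (eLpNorm_lt_top_iff_lintegral_rpow_enorm_lt_top
    (two_ne_zero) (ENNReal.ofNat_ne_top)).mp hm.eLpNorm_lt_top
  have htop : ∫⁻ p, ((‖f p‖₊ : ENNReal)) ^ ((2:ENNReal).toReal) ∂(volume.restrict Khat) = ⊤ := by
    have hcong : ∀ᵐ p ∂(volume.restrict Khat),
        ((‖f p‖₊ : ENNReal)) ^ ((2:ENNReal).toReal)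
          = ENNReal.ofReal ((6 * p.1 * p.2.1 / (1 - p.2.2) ^ 4) ^ 2) := by
      refine hae.mono fun p hp => ?_
      rw [hp]
      have h1 : ((‖g p‖₊ : ENNReal)) ^ ((2:ENNReal).toReal) = ((‖g p‖₊ : ENNReal)) ^ (2 : ℕ) := by
        rw [ENNReal.toReal_ofNat, ← ENNReal.rpow_natCast]
        norm_num
      rw [h1, ← enorm_eq_nnnorm, ← ofReal_norm, ← ENNReal.ofReal_pow (norm_nonneg _)]
      congr 1
      rw [Real.norm_eq_abs, sq_abs]
    rw [lintegral_congr_ae hcong]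
    exact part2
  rw [htop] at hlt
  exact (lt_irrefl _ hlt).elim
end
end

section
/- The projective map φ(x,y,z) = (x/(1+z), y/(1+z), z/(1+z)) restricts to a bijection from the infinite pyramid K∞ onto K̂ ∖ {(0,0,1)}, with inverse (ξ,η,ζ) ↦ (ξ/(1−ζ), η/(1−ζ), ζ/(1−ζ)). Moreover, φ is differentiable at every point (x,y,z) ∈ ℝ³ with z > −1, and the determinant of its (Fréchet) derivative at such a point equals (1+z)^{−4}. -/
open MeasureTheory

noncomputable section

/-- The infinite pyramid K∞ = [0,1] × [0,1] × [0,∞). -/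
def Kinf : Set (ℝ × ℝ × ℝ) :=
  {p | 0 ≤ p.1 ∧ p.1 ≤ 1 ∧ 0 ≤ p.2.1 ∧ p.2.1 ≤ 1 ∧ 0 ≤ p.2.2}

/-- The inverse of the projective map φ: (ξ,η,ζ) ↦ (ξ/(1−ζ), η/(1−ζ), ζ/(1−ζ)). -/
def phiInv (p : ℝ × ℝ × ℝ) : ℝ × ℝ × ℝ :=
  (p.1 / (1 - p.2.2), p.2.1 / (1 - p.2.2), p.2.2 / (1 - p.2.2))

/-- The projective map φ: (x,y,z) ↦ (x/(1+z), y/(1+z), z/(1+z)). -/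
def phiMap (q : ℝ × ℝ × ℝ) : ℝ × ℝ × ℝ :=
  (q.1 / (1 + q.2.2), q.2.1 / (1 + q.2.2), q.2.2 / (1 + q.2.2))

/-! ### Auxiliary material -/

def toFin3 : (ℝ × ℝ × ℝ) →ₗ[ℝ] (Fin 3 → ℝ) where
  toFun p := ![p.1, p.2.1, p.2.2]
  map_add' p q := by funext i; fin_cases i <;> simp
  map_smul' c p := by funext i; fin_cases i <;> simp

def ofFin3 : (Fin 3 → ℝ) →ₗ[ℝ] (ℝ × ℝ × ℝ) where
  toFun f := (f 0, f 1, f 2)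
  map_add' p q := by simp [Prod.ext_iff]
  map_smul' c p := by simp [Prod.ext_iff]

def E3 : (ℝ × ℝ × ℝ) ≃ₗ[ℝ] (Fin 3 → ℝ) :=
  LinearEquiv.ofLinear toFin3 ofFin3
    (by ext f i; fin_cases i <;> simp [toFin3, ofFin3])
    (by apply LinearMap.ext; intro p; simp [toFin3, ofFin3])

lemma E3_apply (p : ℝ × ℝ × ℝ) : E3 p = ![p.1, p.2.1, p.2.2] := rfl
lemma E3_symm_apply (f : Fin 3 → ℝ) : E3.symm f = (f 0, f 1, f 2) := rfl

def b3 : Module.Basis (Fin 3) ℝ (ℝ × ℝ × ℝ) := Module.Basis.ofEquivFun E3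

lemma b3_zero : b3 0 = (1,0,0) := by
  simp [b3, Module.Basis.coe_ofEquivFun, E3_symm_apply, Pi.single_apply]
lemma b3_one : b3 1 = (0,1,0) := by
  simp [b3, Module.Basis.coe_ofEquivFun, E3_symm_apply, Pi.single_apply]
lemma b3_two : b3 2 = (0,0,1) := by
  simp [b3, Module.Basis.coe_ofEquivFun, E3_symm_apply, Pi.single_apply]

lemma b3_repr (p : ℝ × ℝ × ℝ) (i : Fin 3) : b3.repr p i = ![p.1, p.2.1, p.2.2] i := by
  simp [b3, Module.Basis.ofEquivFun_repr_apply, E3_apply]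

lemma deriv_part (q : ℝ × ℝ × ℝ) (hq : -1 < q.2.2) :
    DifferentiableAt ℝ phiMap q ∧
    LinearMap.det ((fderiv ℝ phiMap q : (ℝ × ℝ × ℝ) →L[ℝ] (ℝ × ℝ × ℝ)) :
        (ℝ × ℝ × ℝ) →ₗ[ℝ] (ℝ × ℝ × ℝ)) = (1 + q.2.2) ^ (-4 : ℤ) := by
  set A := 1 + q.2.2 with hAdef
  have hA0 : A ≠ 0 := by dsimp [A]; linarith
  set F : (ℝ × ℝ × ℝ) →L[ℝ] ℝ := ContinuousLinearMap.fst ℝ ℝ (ℝ × ℝ) with hF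
  set Y : (ℝ × ℝ × ℝ) →L[ℝ] ℝ :=
    (ContinuousLinearMap.fst ℝ ℝ ℝ).comp (ContinuousLinearMap.snd ℝ ℝ (ℝ × ℝ)) with hY
  set S : (ℝ × ℝ × ℝ) →L[ℝ] ℝ :=
    (ContinuousLinearMap.snd ℝ ℝ ℝ).comp (ContinuousLinearMap.snd ℝ ℝ (ℝ × ℝ)) with hS
  set I : (ℝ × ℝ × ℝ) →L[ℝ] ℝ :=
    ((1 : ℝ →L[ℝ] ℝ).smulRight (-(A ^ 2)⁻¹)).comp S with hI
  have hx : HasFDerivAt (fun p : ℝ × ℝ × ℝ => p.1) F q := hasFDerivAt_fst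
  have hy : HasFDerivAt (fun p : ℝ × ℝ × ℝ => p.2.1) Y q :=
    hasFDerivAt_fst.comp q hasFDerivAt_snd
  have hzz : HasFDerivAt (fun p : ℝ × ℝ × ℝ => p.2.2) S q :=
    hasFDerivAt_snd.comp q hasFDerivAt_snd
  have hden : HasFDerivAt (fun p : ℝ × ℝ × ℝ => 1 + p.2.2) S q := by
    exact hzz.const_add 1
  have hinvA : HasFDerivAt (Inv.inv : ℝ → ℝ)
      ((1 : ℝ →L[ℝ] ℝ).smulRight (-(A ^ 2)⁻¹)) A := by
    convert (hasDerivAt_inv hA0).hasFDerivAt using 1 <;> ext <;> simp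
  have hinv : HasFDerivAt (fun p : ℝ × ℝ × ℝ => (1 + p.2.2)⁻¹) I q := by
    exact hinvA.comp q hden
  have h1 : HasFDerivAt (fun p : ℝ × ℝ × ℝ => p.1 / (1 + p.2.2))
      (q.1 • I + A⁻¹ • F) q := by
    simp only [div_eq_mul_inv]; exact hx.mul hinv
  have h2 : HasFDerivAt (fun p : ℝ × ℝ × ℝ => p.2.1 / (1 + p.2.2))
      (q.2.1 • I + A⁻¹ • Y) q := by
    simp only [div_eq_mul_inv]; exact hy.mul hinv
  have h3 : HasFDerivAt (fun p : ℝ × ℝ × ℝ => p.2.2 / (1 + p.2.2))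
      (q.2.2 • I + A⁻¹ • S) q := by
    simp only [div_eq_mul_inv]; exact hzz.mul hinv
  have hphi : HasFDerivAt phiMap
      ((q.1 • I + A⁻¹ • F).prod ((q.2.1 • I + A⁻¹ • Y).prod (q.2.2 • I + A⁻¹ • S))) q :=
    h1.prodMk (h2.prodMk h3)
  refine ⟨hphi.differentiableAt, ?_⟩
  rw [hphi.fderiv]
  set L := ((q.1 • I + A⁻¹ • F).prod ((q.2.1 • I + A⁻¹ • Y).prod (q.2.2 • I + A⁻¹ • S)))
  rw [← LinearMap.det_toMatrix b3]
  rw [Matrix.det_fin_three]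
  have e0 : L ((1:ℝ), (0:ℝ×ℝ)) = (A⁻¹, 0, 0) := by
    simp [L, hI, hF, hY, hS, Prod.ext_iff]
  have e1 : L (0,1,0) = (0, A⁻¹, 0) := by
    simp [L, hI, hF, hY, hS, Prod.ext_iff]
  have e2 : L (0,0,1) = (-(q.1 * (A^2)⁻¹), -(q.2.1 * (A^2)⁻¹), -(q.2.2 * (A^2)⁻¹) + A⁻¹) := by
    simp [L, hI, hF, hY, hS, Prod.ext_iff]
  have entry : ∀ i j : Fin 3, (LinearMap.toMatrix b3 b3 (L : (ℝ×ℝ×ℝ) →ₗ[ℝ] (ℝ×ℝ×ℝ))) i j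
      = ![ ![A⁻¹,0,0], ![0,A⁻¹,0], ![-(q.1 * (A^2)⁻¹), -(q.2.1 * (A^2)⁻¹), -(q.2.2 * (A^2)⁻¹) + A⁻¹] ] j i := by
    intro i j
    fin_cases j <;>
      simp [LinearMap.toMatrix_apply, b3_zero, b3_one, b3_two, b3_repr, e0, e1, e2, Prod.mk_zero_zero]
  simp only [entry]
  have hz2 : -(q.2.2 * (A^2)⁻¹) + A⁻¹ = (A^2)⁻¹ := by
    field_simp
    ring_nf
    rw [hAdef]; ring
  simp [hz2]
  have h4 : (A:ℝ) ^ (-4:ℤ) = A⁻¹ * A⁻¹ * (A^2)⁻¹ := by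
    have h5 : (A:ℝ) ^ (-4:ℤ) = ((A:ℝ)^(4:ℕ))⁻¹ := by
      rw [zpow_neg]; norm_cast
    rw [h5, show (A:ℝ)^(4:ℕ) = (A*A*A^2) from by ring, mul_inv, mul_inv]
  exact h4.symm

lemma mapsTo_phi : Set.MapsTo phiMap Kinf (Khat \ {((0:ℝ),(0:ℝ),(1:ℝ))}) := by
  rintro ⟨x, y, z⟩ ⟨hx0, hx1, hy0, hy1, hz0⟩
  have hA : (0:ℝ) < 1 + z := by linarith
  have hζ : 1 - z / (1 + z) = 1 / (1 + z) := by
    rw [eq_div_iff hA.ne', sub_mul, div_mul_cancel₀ _ hA.ne']; ring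
  constructor
  · show 0 ≤ z / (1+z) ∧ z / (1+z) ≤ 1 ∧ 0 ≤ x / (1+z) ∧ x / (1+z) ≤ 1 - z / (1+z)
      ∧ 0 ≤ y / (1+z) ∧ y / (1+z) ≤ 1 - z / (1+z)
    rw [hζ]
    refine ⟨div_nonneg hz0 hA.le, ?_, div_nonneg hx0 hA.le, ?_, div_nonneg hy0 hA.le, ?_⟩
    · rw [div_le_one hA]; linarith
    · gcongr
    · gcongr
  · simp only [Set.mem_singleton_iff, phiMap, Prod.ext_iff, not_and]
    intro _ _
    show ¬ z / (1+z) = 1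
    rw [div_eq_one_iff_eq (ne_of_gt hA)]
    intro h; linarith

lemma left_inv_phi : Set.LeftInvOn phiInv phiMap Kinf := by
  rintro ⟨x, y, z⟩ ⟨hx0, hx1, hy0, hy1, hz0⟩
  have hA : (0:ℝ) < 1 + z := by linarith
  have hζ : 1 - z / (1 + z) = 1 / (1 + z) := by
    rw [eq_div_iff hA.ne', sub_mul, div_mul_cancel₀ _ hA.ne']; ring
  show ((x/(1+z)) / (1 - z/(1+z)), (y/(1+z)) / (1 - z/(1+z)), (z/(1+z)) / (1 - z/(1+z)))
      = (x, y, z)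
  rw [hζ]
  have hA0 : (1:ℝ) + z ≠ 0 := ne_of_gt hA
  refine Prod.ext ?_ (Prod.ext ?_ ?_) <;> · show _ = _; field_simp

lemma zeta_lt_one {p : ℝ × ℝ × ℝ} (hp : p ∈ Khat \ {((0:ℝ),(0:ℝ),(1:ℝ))}) : p.2.2 < 1 := by
  obtain ⟨⟨hz0, hz1, hx0, hx1, hy0, hy1⟩, hne⟩ := hp
  rcases lt_or_eq_of_le hz1 with h | h
  · exact h
  · exfalso
    apply hne
    have hx : p.1 = 0 := le_antisymm (by linarith) hx0
    have hy : p.2.1 = 0 := le_antisymm (by linarith) hy0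
    simp only [Set.mem_singleton_iff]
    exact Prod.ext hx (Prod.ext hy h)

lemma mapsTo_phiInv : Set.MapsTo phiInv (Khat \ {((0:ℝ),(0:ℝ),(1:ℝ))}) Kinf := by
  intro p hp
  have hζ := zeta_lt_one hp
  obtain ⟨⟨hz0, hz1, hx0, hx1, hy0, hy1⟩, -⟩ := hp
  have hB : (0:ℝ) < 1 - p.2.2 := by linarith
  exact ⟨div_nonneg hx0 hB.le, (div_le_one hB).mpr (by linarith),
    div_nonneg hy0 hB.le, (div_le_one hB).mpr (by linarith),
    div_nonneg hz0 hB.le⟩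

lemma right_inv_phi : Set.RightInvOn phiInv phiMap (Khat \ {((0:ℝ),(0:ℝ),(1:ℝ))}) := by
  intro p hp
  have hζ := zeta_lt_one hp
  have hB : (0:ℝ) < 1 - p.2.2 := by linarith
  have hB0 : (1:ℝ) - p.2.2 ≠ 0 := ne_of_gt hB
  have key : 1 + p.2.2 / (1 - p.2.2) = 1 / (1 - p.2.2) := by
    rw [eq_div_iff hB0, add_mul, div_mul_cancel₀ _ hB0]; ring
  show ((p.1/(1-p.2.2)) / (1 + p.2.2/(1-p.2.2)), (p.2.1/(1-p.2.2)) / (1 + p.2.2/(1-p.2.2)),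
      (p.2.2/(1-p.2.2)) / (1 + p.2.2/(1-p.2.2))) = p
  rw [key]
  refine Prod.ext ?_ (Prod.ext ?_ ?_) <;> · show _ = _; field_simp

/-- φ restricts to a bijection from K∞ onto K̂ ∖ {(0,0,1)} with inverse
(ξ,η,ζ) ↦ (ξ/(1−ζ), η/(1−ζ), ζ/(1−ζ)); moreover φ is differentiable at every point
with z > −1 and the determinant of its derivative there is (1+z)⁻⁴. -/
theorem stmt_19 :
    Set.BijOn phiMap Kinf (Khat \ {((0 : ℝ), (0 : ℝ), (1 : ℝ))}) ∧
    Set.InvOn phiInv phiMap Kinf (Khat \ {((0 : ℝ), (0 : ℝ), (1 : ℝ))}) ∧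
    ∀ q : ℝ × ℝ × ℝ, -1 < q.2.2 →
      DifferentiableAt ℝ phiMap q ∧
      LinearMap.det ((fderiv ℝ phiMap q : (ℝ × ℝ × ℝ) →L[ℝ] (ℝ × ℝ × ℝ)) :
          (ℝ × ℝ × ℝ) →ₗ[ℝ] (ℝ × ℝ × ℝ)) = (1 + q.2.2) ^ (-4 : ℤ) := by
  have hinv : Set.InvOn phiInv phiMap Kinf (Khat \ {((0:ℝ),(0:ℝ),(1:ℝ))}) :=
    ⟨left_inv_phi, right_inv_phi⟩
  exact ⟨hinv.bijOn mapsTo_phi mapsTo_phiInv, hinv, deriv_part⟩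
end
end
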